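/- arXiv:1709.01130 — 5 statements merged into one kernel-verified Lean document; each statement's English description precedes it below -/
import Mathlib

section
/- In the Lie algebra g = (sl₂ × gl_m) ⋉ (V_n ⊗ ℝ^m), the element Z = −H/2 − (1 + n/2)·id_m (where H is the standard sl₂ Cartan element and id_m ∈ gl_m) acts diagonalizably by the adjoint action with eigenvalues in {−n−1, −n, ..., −1, 0, 1}, and the eigenspace decomposition g = g_{−n−1} ⊕ ... ⊕ g₀ ⊕ g₁ is a Lie algebra grading: [g_i, g_j] ⊆ g_{i+j}. -/
noncomputable section

open scoped BigOperators

/-- Coefficients `(α, β, γ)` representing `α·X + β·H + γ·Y ∈ sl(2,ℝ)`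
in the standard basis `X = x∂_y`, `H = x∂_x - y∂_y`, `Y = y∂_x`. -/
abbrev Sl2 : Type := ℝ × ℝ × ℝ

/-- `gl(m,ℝ)` -/
abbrev Gl (m : ℕ) : Type := Matrix (Fin m) (Fin m) ℝ

/-- `a = V_n ⊗ ℝ^m` where `V_n = S^n(ℝ²)`, in the basis `v^i ⊗ e_b`,
`v^i = (1/i!) x^{n-i} y^i`. -/
abbrev Avec (n m : ℕ) : Type := Matrix (Fin (n+1)) (Fin m) ℝ

/-- `q = sl₂ × gl_m` -/
abbrev Qlie (m : ℕ) : Type := Sl2 × Gl m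

/-- `g = q ⋉ a` as a vector space -/
abbrev Glie (n m : ℕ) : Type := Qlie m × Avec n m

/-- The Lie bracket on `sl₂` in the basis `X, H, Y`:
`[H,X] = 2X`, `[H,Y] = -2Y`, `[X,Y] = H`. -/
def sl2Bracket (p q : Sl2) : Sl2 :=
  (2*(p.2.1*q.1 - q.2.1*p.1), p.1*q.2.2 - q.1*p.2.2, 2*(q.2.1*p.2.2 - p.2.1*q.2.2))

/-- The matrix of `α·X + β·H + γ·Y` acting on `V_n` in the basis
`v^i = (1/i!)x^{n-i}y^i`, so `X v^i = v^{i-1}`, `H v^i = (n-2i)v^i`,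
`Y v^i = (n-i)(i+1) v^{i+1}`. -/
def sl2Mat (n : ℕ) (p : Sl2) : Matrix (Fin (n+1)) (Fin (n+1)) ℝ :=
  fun i j =>
    p.1 * (if (j:ℕ) = (i:ℕ)+1 then 1 else 0)
    + p.2.1 * (if j = i then (n:ℝ) - 2*(i:ℕ) else 0)
    + p.2.2 * (if (j:ℕ)+1 = (i:ℕ) then ((n:ℝ) - (i:ℕ) + 1) * (i:ℕ) else 0)

/-- The action of `q = sl₂ ⊕ gl_m` on `a = V_n ⊗ ℝ^m` (tensor product of the
natural actions). -/
def qAct (n m : ℕ) (q : Qlie m) (u : Avec n m) : Avec n m :=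
  sl2Mat n q.1 * u + u * q.2.transpose

/-- The semidirect product bracket on `g = q ⋉ a`:
`[A ⊕ u, B ⊕ v] = [A,B] ⊕ (A·v − B·u)`. -/
def gBracket {n m : ℕ} (x y : Glie n m) : Glie n m :=
  ((sl2Bracket x.1.1 y.1.1, x.1.2 * y.1.2 - y.1.2 * x.1.2),
   qAct n m x.1 y.2 - qAct n m y.1 x.2)

/-- `X` as an element of `g`. -/
def Xg (n m : ℕ) : Glie n m := (((1,0,0), 0), 0)

/-- `Y` as an element of `g`. -/
def Yg (n m : ℕ) : Glie n m := (((0,0,1), 0), 0)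

/-- The inclusion `a → g`. -/
def embA {n m : ℕ} (u : Avec n m) : Glie n m := (0, u)

/-- The grading element `Z = −H/2 − (1 + n/2)·id_m ∈ q ⊆ g`. -/
def zElt (n m : ℕ) : Glie n m := (((0, -(1:ℝ)/2, 0), (-(1 + (n:ℝ)/2)) • (1 : Gl m)), 0)

/-- The eigenspace of `ad_Z` with eigenvalue `i`. -/
def Egrade (n m : ℕ) (i : ℤ) : Set (Glie n m) :=
  {x | gBracket (zElt n m) x = (i : ℝ) • x}

lemma adZ_apply (n m : ℕ) (x : Glie n m) :
    gBracket (zElt n m) x =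
      (((-x.1.1.1, 0, x.1.1.2.2), 0), fun (i : Fin (n+1)) (b : Fin m) => (((i:ℕ):ℝ) - n - 1) * x.2 i b) := by
  obtain ⟨⟨⟨a, b, c⟩, B⟩, u⟩ := x
  simp only [gBracket, zElt, sl2Bracket, qAct]
  refine Prod.ext (Prod.ext (Prod.ext ?_ (Prod.ext ?_ ?_)) ?_) ?_
  · ring
  · ring
  · ring
  · simp [Matrix.smul_mul, Matrix.mul_smul]
  · funext i j
    simp [Matrix.mul_apply, sl2Mat, Matrix.transpose_smul, Matrix.mul_smul,
      Finset.mul_sum, ite_mul, Finset.sum_ite_eq' ]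
    ring

lemma mem_Egrade_iff (n m : ℕ) (k : ℤ) (x : Glie n m) :
    x ∈ Egrade n m k ↔
      (k = -1 ∨ x.1.1.1 = 0) ∧ (k = 0 ∨ x.1.1.2.1 = 0) ∧ (k = 1 ∨ x.1.1.2.2 = 0) ∧
      (k = 0 ∨ x.1.2 = 0) ∧ ∀ (i : Fin (n+1)) (b : Fin m), ((i:ℤ) = k + (n:ℤ) + 1 ∨ x.2 i b = 0) := by
  obtain ⟨⟨⟨a, b, c⟩, B⟩, u⟩ := x
  dsimp only
  show gBracket _ _ = _ ↔ _
  rw [adZ_apply]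
  have hs : ((k:ℝ) • ((((a,b,c),B),u) : Glie n m)) = ((((k:ℝ)*a, (k:ℝ)*b, (k:ℝ)*c), (k:ℝ)•B), (k:ℝ)•u) := rfl
  rw [hs]; erw [Prod.mk.injEq, Prod.mk.injEq, Prod.mk.injEq, Prod.mk.injEq]
  constructor
  · rintro ⟨⟨⟨h1, h2, h3⟩, h4⟩, h5⟩
    dsimp only at h1 h2 h3 h4 h5
    refine ⟨?_, ?_, ?_, ?_, ?_⟩
    · rcases mul_eq_zero.1 (show ((k:ℝ)+1)*a = 0 by rw [add_mul, one_mul, ← h1]; ring) with h | h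
      · left; have : (k:ℝ) = -1 := by linarith
        exact_mod_cast this
      · right; exact h
    · rcases mul_eq_zero.1 h2.symm with h | h
      · left; exact_mod_cast h
      · right; exact h
    · rcases mul_eq_zero.1 (show ((k:ℝ)-1)*c = 0 by rw [sub_mul, one_mul, ← h3]; ring) with h | h
      · left; have : (k:ℝ) = 1 := by linarith
        exact_mod_cast this
      · right; exact h
    · rcases smul_eq_zero.1 h4.symm with h | h
      · left; exact_mod_cast h
      · right; exact h
    · intro i bb
      have := congrFun (congrFun h5 i) bb
      simp only [Matrix.smul_apply, smul_eq_mul] at this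
      rcases mul_eq_zero.1 (show (((i:ℕ):ℝ) - n - 1 - k) * u i bb = 0 by rw [sub_mul, this]; ring) with h | h
      · left; have : ((i:ℕ):ℝ) = (k:ℝ) + n + 1 := by linarith
        exact_mod_cast this
      · right; exact h
  · rintro ⟨h1, h2, h3, h4, h5⟩
    refine ⟨⟨⟨?_, ?_, ?_⟩, ?_⟩, ?_⟩
    · rcases h1 with rfl | rfl
      · push_cast; ring
      · simp
    · rcases h2 with rfl | rfl
      · push_cast; ring
      · simp
    · rcases h3 with rfl | rfl
      · push_cast; ring
      · simp
    · rcases h4 with rfl | rfl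
      · simp
      · simp
    · funext i bb
      simp only [Matrix.smul_apply, smul_eq_mul]
      rcases h5 i bb with h | h
      · have : ((i:ℕ):ℝ) = (k:ℝ) + n + 1 := by exact_mod_cast h
        rw [this]; ring
      · rw [h]; ring

lemma zero_mem_Egrade (n m : ℕ) (k : ℤ) : (0 : Glie n m) ∈ Egrade n m k := by
  rw [mem_Egrade_iff]
  refine ⟨Or.inr rfl, Or.inr rfl, Or.inr rfl, Or.inr rfl, fun i b => Or.inr rfl⟩

/-- The projection onto the `k`-eigenspace. -/
def projG (n m : ℕ) (k : ℤ) (x : Glie n m) : Glie n m :=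
  (((if k = -1 then x.1.1.1 else 0, if k = 0 then x.1.1.2.1 else 0,
     if k = 1 then x.1.1.2.2 else 0),
    if k = 0 then x.1.2 else 0),
   fun i b => if (i:ℤ) = k + (n:ℤ) + 1 then x.2 i b else 0)

lemma projG_mem (n m : ℕ) (k : ℤ) (x : Glie n m) : projG n m k x ∈ Egrade n m k := by
  rw [mem_Egrade_iff]
  refine ⟨?_, ?_, ?_, ?_, fun i b => ?_⟩
  · by_cases h : k = -1
    · exact Or.inl h
    · exact Or.inr (by simp [projG, h])
  · by_cases h : k = 0
    · exact Or.inl h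
    · exact Or.inr (by simp [projG, h])
  · by_cases h : k = 1
    · exact Or.inl h
    · exact Or.inr (by simp [projG, h])
  · by_cases h : k = 0
    · exact Or.inl h
    · exact Or.inr (by simp [projG, h])
  · by_cases h : (i:ℤ) = k + (n:ℤ) + 1
    · exact Or.inl h
    · exact Or.inr (by simp [projG, h])

lemma projG_zero_of_not_mem (n m : ℕ) (k : ℤ) (x : Glie n m)
    (hk : k ∉ Finset.Icc (-(n:ℤ)-1) 1) : projG n m k x = 0 := by
  rw [Finset.mem_Icc, not_and_or, not_le, not_le] at hk
  have hk1 : k ≠ -1 := by omega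
  have hk0 : k ≠ 0 := by omega
  have hk2 : k ≠ 1 := by omega
  refine Prod.ext (Prod.ext (Prod.ext ?_ (Prod.ext ?_ ?_)) ?_) ?_ <;>
    simp only [projG, if_neg hk1, if_neg hk0, if_neg hk2]
  · rfl
  · rfl
  · rfl
  · rfl
  · funext i b
    have h1 : ((i:ℕ):ℤ) < (n:ℤ) + 1 := by exact_mod_cast i.isLt
    have h2 : (0:ℤ) ≤ ((i:ℕ):ℤ) := Int.natCast_nonneg _
    rw [if_neg (by omega)]
    rfl

lemma eigen_zero (n m : ℕ) (i : ℤ) (hi : i < -(n:ℤ) - 1 ∨ 1 < i) :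
    Egrade n m i = {0} := by
  ext x
  simp only [Set.mem_singleton_iff]
  constructor
  · intro hx
    rw [mem_Egrade_iff] at hx
    obtain ⟨h1, h2, h3, h4, h5⟩ := hx
    have hi1 : i ≠ -1 := by omega
    have hi0 : i ≠ 0 := by omega
    have hi2 : i ≠ 1 := by omega
    refine Prod.ext (Prod.ext (Prod.ext ?_ (Prod.ext ?_ ?_)) ?_) ?_
    · exact h1.resolve_left hi1
    · exact h2.resolve_left hi0
    · exact h3.resolve_left hi2
    · exact h4.resolve_left hi0
    · funext r b
      refine (h5 r b).resolve_left ?_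
      have ha : ((r:ℕ):ℤ) < (n:ℤ) + 1 := by exact_mod_cast r.isLt
      have hb : (0:ℤ) ≤ ((r:ℕ):ℤ) := Int.natCast_nonneg _
      omega
  · rintro rfl
    exact zero_mem_Egrade n m i

lemma sum_projG (n m : ℕ) (x : Glie n m) :
    x = ∑ k ∈ Finset.Icc (-(n:ℤ)-1) 1, projG n m k x := by
  have hmem : ∀ d : ℤ, -(n:ℤ)-1 ≤ d → d ≤ 1 → d ∈ Finset.Icc (-(n:ℤ)-1) 1 := by
    intro d h1 h2; rw [Finset.mem_Icc]; exact ⟨h1, h2⟩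
  refine Prod.ext (Prod.ext (Prod.ext ?_ (Prod.ext ?_ ?_)) ?_) ?_
  · rw [Prod.fst_sum, Prod.fst_sum, Prod.fst_sum]
    simp only [projG]
    rw [Finset.sum_ite_eq' (Finset.Icc (-(n:ℤ)-1) 1) (-1) (fun _ => x.1.1.1),
      if_pos (hmem (-1) (by omega) (by omega))]
  · rw [Prod.fst_sum, Prod.fst_sum, Prod.snd_sum, Prod.fst_sum]
    simp only [projG]
    rw [Finset.sum_ite_eq' (Finset.Icc (-(n:ℤ)-1) 1) 0 (fun _ => x.1.1.2.1),
      if_pos (hmem 0 (by omega) (by omega))]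
  · rw [Prod.fst_sum, Prod.fst_sum, Prod.snd_sum, Prod.snd_sum]
    simp only [projG]
    rw [Finset.sum_ite_eq' (Finset.Icc (-(n:ℤ)-1) 1) 1 (fun _ => x.1.1.2.2),
      if_pos (hmem 1 (by omega) (by omega))]
  · rw [Prod.fst_sum, Prod.snd_sum]
    simp only [projG]
    rw [Finset.sum_ite_eq' (Finset.Icc (-(n:ℤ)-1) 1) 0 (fun _ => x.1.2),
      if_pos (hmem 0 (by omega) (by omega))]
  · rw [Prod.snd_sum]
    funext r b
    rw [Matrix.sum_apply]
    simp only [projG]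
    have ha : ((r:ℕ):ℤ) < (n:ℤ) + 1 := by exact_mod_cast r.isLt
    have hb : (0:ℤ) ≤ ((r:ℕ):ℤ) := Int.natCast_nonneg _
    rw [Finset.sum_congr rfl (fun k _ =>
      if_congr (show ((r:ℕ):ℤ) = k + (n:ℤ) + 1 ↔ k = ((r:ℕ):ℤ) - (n:ℤ) - 1 by omega)
        rfl rfl)]
    rw [Finset.sum_ite_eq' (Finset.Icc (-(n:ℤ)-1) 1) (((r:ℕ):ℤ) - (n:ℤ) - 1)
      (fun _ => x.2 r b), if_pos (hmem _ (by omega) (by omega))]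

lemma decomp_unique (n m : ℕ) (x : Glie n m) (f : ℤ → Glie n m)
    (h1 : ∀ i, f i ∈ Egrade n m i)
    (h2 : ∀ i ∉ Finset.Icc (-(n:ℤ)-1) 1, f i = 0)
    (h3 : x = ∑ i ∈ Finset.Icc (-(n:ℤ)-1) 1, f i) :
    f = fun k => projG n m k x := by
  have hmemIcc : ∀ d : ℤ, -(n:ℤ)-1 ≤ d → d ≤ 1 → d ∈ Finset.Icc (-(n:ℤ)-1) 1 := by
    intro d ha hb; rw [Finset.mem_Icc]; exact ⟨ha, hb⟩
  have hxa : x.1.1.1 = (f (-1)).1.1.1 := by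
    rw [h3, Prod.fst_sum, Prod.fst_sum, Prod.fst_sum]
    refine Finset.sum_eq_single (-1) (fun j _ hne => ?_)
      (fun habs => absurd (hmemIcc (-1) (by omega) (by omega)) habs)
    exact (((mem_Egrade_iff n m j (f j)).1 (h1 j)).1).resolve_left hne
  have hxb : x.1.1.2.1 = (f 0).1.1.2.1 := by
    rw [h3, Prod.fst_sum, Prod.fst_sum, Prod.snd_sum, Prod.fst_sum]
    refine Finset.sum_eq_single 0 (fun j _ hne => ?_)
      (fun habs => absurd (hmemIcc 0 (by omega) (by omega)) habs)
    exact (((mem_Egrade_iff n m j (f j)).1 (h1 j)).2.1).resolve_left hne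
  have hxc : x.1.1.2.2 = (f 1).1.1.2.2 := by
    rw [h3, Prod.fst_sum, Prod.fst_sum, Prod.snd_sum, Prod.snd_sum]
    refine Finset.sum_eq_single 1 (fun j _ hne => ?_)
      (fun habs => absurd (hmemIcc 1 (by omega) (by omega)) habs)
    exact (((mem_Egrade_iff n m j (f j)).1 (h1 j)).2.2.1).resolve_left hne
  have hxB : x.1.2 = (f 0).1.2 := by
    rw [h3, Prod.fst_sum, Prod.snd_sum]
    refine Finset.sum_eq_single 0 (fun j _ hne => ?_)
      (fun habs => absurd (hmemIcc 0 (by omega) (by omega)) habs)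
    exact (((mem_Egrade_iff n m j (f j)).1 (h1 j)).2.2.2.1).resolve_left hne
  have hxu : ∀ (r : Fin (n+1)) (b : Fin m),
      x.2 r b = (f (((r:ℕ):ℤ) - (n:ℤ) - 1)).2 r b := by
    intro r b
    have ha : ((r:ℕ):ℤ) < (n:ℤ) + 1 := by exact_mod_cast r.isLt
    have hb : (0:ℤ) ≤ ((r:ℕ):ℤ) := Int.natCast_nonneg _
    rw [h3, Prod.snd_sum, Matrix.sum_apply]
    refine Finset.sum_eq_single _ (fun j _ hne => ?_)
      (fun habs => absurd (hmemIcc _ (by omega) (by omega)) habs)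
    exact ((((mem_Egrade_iff n m j (f j)).1 (h1 j)).2.2.2.2 r b)).resolve_left
      (fun hc => hne (by omega))
  funext k
  by_cases hk : k ∈ Finset.Icc (-(n:ℤ)-1) 1
  · refine Prod.ext (Prod.ext (Prod.ext ?_ (Prod.ext ?_ ?_)) ?_) ?_
    · show (f k).1.1.1 = if k = -1 then x.1.1.1 else 0
      by_cases hk1 : k = -1
      · subst hk1; rw [if_pos rfl, hxa]
      · rw [if_neg hk1]
        exact (((mem_Egrade_iff n m k (f k)).1 (h1 k)).1).resolve_left hk1
    · show (f k).1.1.2.1 = if k = 0 then x.1.1.2.1 else 0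
      by_cases hk1 : k = 0
      · subst hk1; rw [if_pos rfl, hxb]
      · rw [if_neg hk1]
        exact (((mem_Egrade_iff n m k (f k)).1 (h1 k)).2.1).resolve_left hk1
    · show (f k).1.1.2.2 = if k = 1 then x.1.1.2.2 else 0
      by_cases hk1 : k = 1
      · subst hk1; rw [if_pos rfl, hxc]
      · rw [if_neg hk1]
        exact (((mem_Egrade_iff n m k (f k)).1 (h1 k)).2.2.1).resolve_left hk1
    · show (f k).1.2 = if k = 0 then x.1.2 else 0
      by_cases hk1 : k = 0
      · subst hk1; rw [if_pos rfl, hxB]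
      · rw [if_neg hk1]
        exact (((mem_Egrade_iff n m k (f k)).1 (h1 k)).2.2.2.1).resolve_left hk1
    · funext r b
      show (f k).2 r b = if ((r:ℕ):ℤ) = k + (n:ℤ) + 1 then x.2 r b else 0
      by_cases hc : ((r:ℕ):ℤ) = k + (n:ℤ) + 1
      · rw [if_pos hc, hxu r b, show ((r:ℕ):ℤ) - (n:ℤ) - 1 = k from by omega]
      · rw [if_neg hc]
        exact ((((mem_Egrade_iff n m k (f k)).1 (h1 k)).2.2.2.2 r b)).resolve_left hc
  · rw [h2 k hk, projG_zero_of_not_mem n m k x hk]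

lemma sl2Mat_mul_eq_zero (n m : ℕ) (i j : ℤ) (p : Sl2) (u : Avec n m)
    (h1 : i = -1 ∨ p.1 = 0) (h2 : i = 0 ∨ p.2.1 = 0) (h3 : i = 1 ∨ p.2.2 = 0)
    (hu : ∀ (s : Fin (n+1)) (b : Fin m), ((s:ℕ):ℤ) = j + (n:ℤ) + 1 ∨ u s b = 0)
    (r : Fin (n+1)) (b : Fin m) (hr : ((r:ℕ):ℤ) ≠ i + j + (n:ℤ) + 1) :
    (sl2Mat n p * u) r b = 0 := by
  rw [Matrix.mul_apply]
  refine Finset.sum_eq_zero fun s _ => ?_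
  rcases hu s b with hs | h0
  · show (p.1 * (if (s:ℕ) = (r:ℕ)+1 then 1 else 0)
      + p.2.1 * (if s = r then (n:ℝ) - 2*(r:ℕ) else 0)
      + p.2.2 * (if (s:ℕ)+1 = (r:ℕ) then ((n:ℝ) - (r:ℕ) + 1) * (r:ℕ) else 0)) * u s b = 0
    by_cases e2 : s = r
    · have hsr : (s:ℕ) = (r:ℕ) := by rw [e2]
      rw [if_neg (show ¬((s:ℕ) = (r:ℕ)+1) by omega), if_pos e2,
        if_neg (show ¬((s:ℕ)+1 = (r:ℕ)) by omega)]
      rcases h2 with hi | hp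
      · exact absurd hs (by omega)
      · rw [hp]; ring
    · rw [if_neg e2]
      by_cases e1 : (s:ℕ) = (r:ℕ)+1
      · rw [if_pos e1]
        rcases h1 with hi | hp
        · exact absurd hs (by omega)
        · rw [hp, if_neg (show ¬((s:ℕ)+1 = (r:ℕ)) by omega)]; ring
      · rw [if_neg e1]
        by_cases e3 : (s:ℕ)+1 = (r:ℕ)
        · rw [if_pos e3]
          rcases h3 with hi | hp
          · exact absurd hs (by omega)
          · rw [hp]; ring
        · rw [if_neg e3]; ring
  · rw [h0, mul_zero]

lemma mul_transpose_eq_zero (n m : ℕ) (i j : ℤ) (B : Gl m) (u : Avec n m)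
    (hB : i = 0 ∨ B = 0)
    (hu : ∀ (s : Fin (n+1)) (b : Fin m), ((s:ℕ):ℤ) = j + (n:ℤ) + 1 ∨ u s b = 0)
    (r : Fin (n+1)) (b : Fin m) (hr : ((r:ℕ):ℤ) ≠ i + j + (n:ℤ) + 1) :
    (u * B.transpose) r b = 0 := by
  rcases hB with hi | hB0
  · rw [Matrix.mul_apply]
    refine Finset.sum_eq_zero fun c _ => ?_
    rcases hu r c with hrow | h0
    · exact absurd hrow (by omega)
    · rw [h0, zero_mul]
  · rw [hB0]; simp

lemma bracket_grade (n m : ℕ) (i j : ℤ) (x y : Glie n m)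
    (hx : x ∈ Egrade n m i) (hy : y ∈ Egrade n m j) :
    gBracket x y ∈ Egrade n m (i + j) := by
  rw [mem_Egrade_iff] at hx hy ⊢
  obtain ⟨hx1, hx2, hx3, hx4, hx5⟩ := hx
  obtain ⟨hy1, hy2, hy3, hy4, hy5⟩ := hy
  refine ⟨?_, ?_, ?_, ?_, ?_⟩
  · by_cases h : i + j = -1
    · exact Or.inl h
    · right
      show 2*(x.1.1.2.1*y.1.1.1 - y.1.1.2.1*x.1.1.1) = 0
      have e1 : x.1.1.2.1*y.1.1.1 = 0 := by
        rcases hx2 with hi | h0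
        · rcases hy1 with hj | h0
          · exact absurd (by omega) h
          · rw [h0, mul_zero]
        · rw [h0, zero_mul]
      have e2 : y.1.1.2.1*x.1.1.1 = 0 := by
        rcases hy2 with hj | h0
        · rcases hx1 with hi | h0
          · exact absurd (by omega) h
          · rw [h0, mul_zero]
        · rw [h0, zero_mul]
      rw [e1, e2]; ring
  · by_cases h : i + j = 0
    · exact Or.inl h
    · right
      show x.1.1.1*y.1.1.2.2 - y.1.1.1*x.1.1.2.2 = 0
      have e1 : x.1.1.1*y.1.1.2.2 = 0 := by
        rcases hx1 with hi | h0
        · rcases hy3 with hj | h0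
          · exact absurd (by omega) h
          · rw [h0, mul_zero]
        · rw [h0, zero_mul]
      have e2 : y.1.1.1*x.1.1.2.2 = 0 := by
        rcases hy1 with hj | h0
        · rcases hx3 with hi | h0
          · exact absurd (by omega) h
          · rw [h0, mul_zero]
        · rw [h0, zero_mul]
      rw [e1, e2]; ring
  · by_cases h : i + j = 1
    · exact Or.inl h
    · right
      show 2*(y.1.1.2.1*x.1.1.2.2 - x.1.1.2.1*y.1.1.2.2) = 0
      have e1 : y.1.1.2.1*x.1.1.2.2 = 0 := by
        rcases hy2 with hj | h0
        · rcases hx3 with hi | h0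
          · exact absurd (by omega) h
          · rw [h0, mul_zero]
        · rw [h0, zero_mul]
      have e2 : x.1.1.2.1*y.1.1.2.2 = 0 := by
        rcases hx2 with hi | h0
        · rcases hy3 with hj | h0
          · exact absurd (by omega) h
          · rw [h0, mul_zero]
        · rw [h0, zero_mul]
      rw [e1, e2]; ring
  · by_cases h : i + j = 0
    · exact Or.inl h
    · right
      show x.1.2*y.1.2 - y.1.2*x.1.2 = 0
      rcases hx4 with hi | h0
      · rcases hy4 with hj | h0
        · exact absurd (by omega) h
        · rw [h0]; simp
      · rw [h0]; simp
  · intro r b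
    by_cases h : ((r:ℕ):ℤ) = i + j + (n:ℤ) + 1
    · exact Or.inl h
    · right
      show (qAct n m x.1 y.2 - qAct n m y.1 x.2) r b = 0
      rw [Matrix.sub_apply]
      show (sl2Mat n x.1.1 * y.2 + y.2 * x.1.2.transpose) r b
        - (sl2Mat n y.1.1 * x.2 + x.2 * y.1.2.transpose) r b = 0
      rw [Matrix.add_apply, Matrix.add_apply,
        sl2Mat_mul_eq_zero n m i j x.1.1 y.2 hx1 hx2 hx3 hy5 r b h,
        mul_transpose_eq_zero n m i j x.1.2 y.2 hx4 hy5 r b h,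
        sl2Mat_mul_eq_zero n m j i y.1.1 x.2 hy1 hy2 hy3 hx5 r b (by omega),
        mul_transpose_eq_zero n m j i y.1.2 x.2 hy4 hx5 r b (by omega)]
      ring

/-- `Z = −H/2 − (1 + n/2)·id_m` acts diagonalizably on `g` by the
adjoint action with eigenvalues in `{−n−1, ..., 0, 1}`: every eigenvalue lies in
that range, every element of `g` decomposes uniquely into a sum of
eigenvectors, and the eigenspace decomposition is a Lie algebra grading:
`[g_i, g_j] ⊆ g_{i+j}`. -/
theorem adZ_grading (n m : ℕ) (hn : 2 ≤ n) (hm : 1 ≤ m) :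
    (∀ i : ℤ, (i < -(n:ℤ) - 1 ∨ 1 < i) → Egrade n m i = {0}) ∧
    (∀ x : Glie n m, ∃! f : ℤ → Glie n m,
        (∀ i, f i ∈ Egrade n m i) ∧ (∀ i ∉ Finset.Icc (-(n:ℤ)-1) 1, f i = 0) ∧
        x = ∑ i ∈ Finset.Icc (-(n:ℤ)-1) 1, f i) ∧
    (∀ (i j : ℤ) (x y : Glie n m), x ∈ Egrade n m i → y ∈ Egrade n m j →
        gBracket x y ∈ Egrade n m (i + j)) := by
  refine ⟨fun i hi => eigen_zero n m i hi, fun x => ?_,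
    fun i j x y hx hy => bracket_grade n m i j x y hx hy⟩
  exact ⟨fun k => projG n m k x,
    ⟨fun i => projG_mem n m i x, fun i hi => projG_zero_of_not_mem n m i x hi, sum_projG n m x⟩,
    fun f hf => decomp_unique n m x f hf.1 hf.2.1 hf.2.2⟩
end
end

section
/- In the graded Lie algebra g arising from an (n+1)-st order ODE system, the Lie bracket restricted to negative degrees satisfies the strong condition [g^i, g^j] ⊆ g^{min(i,j)−1} for all i,j < 0, where g^i = ⊕_{k≥i} g_k is the induced filtration. -/
noncomputable section

open scoped BigOperators

/-- The filtration `g^i = ⊕_{k ≥ i} g_k` induced by the grading. -/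
def gFilt (n m : ℕ) (i : ℤ) : Set (Glie n m) :=
  {x | ∃ f : ℤ → Glie n m, (∀ k, f k ∈ Egrade n m k) ∧ (∀ k, k < i → f k = 0) ∧
    x = ∑ k ∈ Finset.Icc (-(n:ℤ)-1) 1, f k}

lemma qAct_zeroA (n m : ℕ) (q : Qlie m) : qAct n m q (0 : Avec n m) = 0 := by
  simp [qAct]

lemma qAct_z (n m : ℕ) (u : Avec n m) (j : Fin (n+1)) (b : Fin m) :
    qAct n m (zElt n m).1 u j b = ((j:ℝ) - n - 1) * u j b := by
  have h1 : sl2Mat n ((0:ℝ), -(1:ℝ)/2, 0) = Matrix.diagonal (fun i : Fin (n+1) => (i:ℝ) - (n:ℝ)/2) := by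
    ext i l
    by_cases h : l = i
    · subst h; simp [sl2Mat, Matrix.diagonal]; ring
    · simp [sl2Mat, Matrix.diagonal, h, Ne.symm h]
  simp only [qAct, zElt, h1, Matrix.add_apply, Matrix.diagonal_mul, Matrix.transpose_smul,
    Matrix.transpose_one, Matrix.mul_smul, Matrix.mul_one, Matrix.smul_apply, smul_eq_mul]
  ring

/-- The degree-`k` component of `x`. -/
def gComp (n m : ℕ) (x : Glie n m) (k : ℤ) : Glie n m :=
  ((((if k = -1 then x.1.1.1 else 0), (if k = 0 then x.1.1.2.1 else 0),
      (if k = 1 then x.1.1.2.2 else 0)),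
    (if k = 0 then x.1.2 else 0)),
   Matrix.of fun j b => if (j:ℤ) = k + (n:ℤ) + 1 then x.2 j b else 0)

lemma gComp_mem (n m : ℕ) (x : Glie n m) (k : ℤ) : gComp n m x k ∈ Egrade n m k := by
  show gBracket (zElt n m) _ = (k:ℝ) • _
  have hz : (zElt n m).2 = 0 := rfl
  unfold gBracket gComp
  refine Prod.ext (Prod.ext ?_ ?_) ?_
  · -- sl2 part
    show sl2Bracket (zElt n m).1.1 _ = _
    simp only [zElt, sl2Bracket]
    refine Prod.ext ?_ (Prod.ext ?_ ?_)
    · show _ = (k:ℝ) • _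
      simp only [smul_eq_mul]
      by_cases hk : k = -1 <;> simp [hk] <;> push_cast <;> ring
    · show _ = (k:ℝ) • _
      simp only [smul_eq_mul]
      by_cases hk : k = 0 <;> simp [hk] <;> push_cast <;> ring
    · show _ = (k:ℝ) • _
      simp only [smul_eq_mul]
      by_cases hk : k = 1 <;> simp [hk] <;> push_cast <;> ring
  · -- gl part
    show (zElt n m).1.2 * _ - _ * (zElt n m).1.2 = (k:ℝ) • _
    simp only [zElt]
    split_ifs with h
    · subst h
      simp [smul_mul_assoc, mul_smul_comm]
    · simp
  · -- a part
    show qAct n m (zElt n m).1 _ - qAct n m _ (zElt n m).2 = (k:ℝ) • _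
    rw [hz, qAct_zeroA, sub_zero]
    ext j b
    rw [qAct_z]
    simp only [Matrix.smul_apply, Matrix.of_apply, smul_eq_mul]
    split_ifs with h
    · have : (j:ℝ) = (k:ℝ) + n + 1 := by exact_mod_cast h
      rw [this]; ring
    · ring

lemma sum_ind {β : Type*} [AddCommMonoid β] (n : ℕ) (c : ℤ) (hc : -(n:ℤ)-1 ≤ c ∧ c ≤ 1) (v : β) :
    (∑ k ∈ Finset.Icc (-(n:ℤ)-1) 1, if k = c then v else 0) = v := by
  rw [Finset.sum_ite_eq', if_pos (Finset.mem_Icc.mpr hc)]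

lemma filt_rows (n m : ℕ) (i : ℤ) (x : Glie n m) (hx : x ∈ gFilt n m i) :
    ∀ (j : Fin (n+1)) (b : Fin m), (j:ℤ) < i + n + 1 → x.2 j b = 0 := by
  obtain ⟨f, hE, hv, hsum⟩ := hx
  intro j b hj
  have : x.2 j b = ∑ k ∈ Finset.Icc (-(n:ℤ)-1) 1, (f k).2 j b := by
    rw [hsum, Prod.snd_sum, Matrix.sum_apply]
  rw [this]
  apply Finset.sum_eq_zero
  intro k _
  rcases lt_or_ge k i with hk | hk
  · rw [hv k hk]; rfl
  · have h2 := congrFun (congrFun (congrArg Prod.snd (hE k)) j) b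
    simp only [gBracket] at h2
    rw [show (zElt n m).2 = (0 : Avec n m) from rfl, qAct_zeroA, sub_zero] at h2
    simp only [Prod.smul_snd, Matrix.smul_apply, smul_eq_mul] at h2
    rw [qAct_z] at h2
    have hne : (j:ℝ) - n - 1 ≠ (k:ℝ) := by
      have : (j:ℤ) - n - 1 ≠ k := by omega
      intro hc
      apply this
      exact_mod_cast (by push_cast; linarith [hc] : ((j:ℤ) - n - 1 : ℝ) = (k:ℝ))
    by_contra hnz
    exact hne (mul_right_cancel₀ hnz h2)
    
lemma mem_filt_of_rows (n m : ℕ) (i : ℤ) (hi : i ≤ -1) (x : Glie n m)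
    (h : ∀ (j : Fin (n+1)) (b : Fin m), (j:ℤ) < i + n + 1 → x.2 j b = 0) :
    x ∈ gFilt n m i := by
  refine ⟨gComp n m x, fun k => gComp_mem n m x k, ?_, ?_⟩
  · intro k hk
    have hk1 : k ≠ -1 := by omega
    have hk0 : k ≠ 0 := by omega
    have hk2 : k ≠ 1 := by omega
    unfold gComp
    refine Prod.ext (Prod.ext ?_ ?_) ?_
    · simp [hk0, hk1, hk2]
    · simp [hk0]
    · ext j b
      simp only [Matrix.of_apply]
      split_ifs with hj
      · exact h j b (by omega)
      · rfl
  · symm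
    refine Prod.ext (Prod.ext ?_ ?_) ?_
    · rw [Prod.fst_sum]
      rw [Prod.fst_sum]
      refine Prod.ext ?_ (Prod.ext ?_ ?_)
      · rw [Prod.fst_sum]
        show (∑ k ∈ Finset.Icc (-(n:ℤ)-1) 1, if k = -1 then x.1.1.1 else 0) = _
        exact sum_ind n (-1) ⟨by omega, by omega⟩ _
      · rw [Prod.snd_sum, Prod.fst_sum]
        show (∑ k ∈ Finset.Icc (-(n:ℤ)-1) 1, if k = 0 then x.1.1.2.1 else 0) = _
        exact sum_ind n 0 ⟨by omega, by omega⟩ _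
      · rw [Prod.snd_sum, Prod.snd_sum]
        show (∑ k ∈ Finset.Icc (-(n:ℤ)-1) 1, if k = 1 then x.1.1.2.2 else 0) = _
        exact sum_ind n 1 ⟨by omega, by omega⟩ _
    · rw [Prod.fst_sum, Prod.snd_sum]
      show (∑ k ∈ Finset.Icc (-(n:ℤ)-1) 1, if k = 0 then x.1.2 else 0) = _
      exact sum_ind n 0 ⟨by omega, by omega⟩ _
    · rw [Prod.snd_sum]
      ext j b
      rw [Matrix.sum_apply]
      show (∑ k ∈ Finset.Icc (-(n:ℤ)-1) 1, if (j:ℤ) = k + n + 1 then x.2 j b else 0) = _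
      rw [Finset.sum_congr rfl (fun k _ => if_congr (by omega : ((j:ℤ) = k + n + 1) ↔ (k = (j:ℤ) - n - 1)) rfl rfl)]
      exact sum_ind n ((j:ℤ) - n - 1) ⟨by omega, by have := j.isLt; omega⟩ _

lemma sl2Mat_far (n : ℕ) (p : Sl2) (r l : Fin (n+1)) (h : (r:ℕ)+1 < (l:ℕ)) :
    sl2Mat n p r l = 0 := by
  have h1 : ¬ ((l:ℕ) = (r:ℕ)+1) := by omega
  have h2 : l ≠ r := by intro hc; subst hc; omega
  have h3 : ¬ ((l:ℕ)+1 = (r:ℕ)) := by omega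
  simp [sl2Mat, h1, h2, h3]

lemma qAct_row (n m : ℕ) (q : Qlie m) (v : Avec n m) (c : ℤ)
    (hv : ∀ (j : Fin (n+1)) (b : Fin m), (j:ℤ) < c → v j b = 0)
    (r : Fin (n+1)) (b : Fin m) (hr : (r:ℤ) + 1 < c) :
    qAct n m q v r b = 0 := by
  simp only [qAct, Matrix.add_apply, Matrix.mul_apply]
  rw [Finset.sum_eq_zero, Finset.sum_eq_zero, add_zero]
  · intro l _
    rw [hv r l (by omega)]
    ring
  · intro l _
    rcases lt_or_ge ((l:ℤ)) c with hl | hl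
    · rw [hv l b hl]; ring
    · rw [sl2Mat_far n q.1 r l (by have := r.isLt; omega)]; ring

/-- the bracket of `g` restricted to negative filtration degrees
satisfies the strong condition `[g^i, g^j] ⊆ g^{min(i,j)−1}` for all `i,j < 0`. -/
theorem strong_bracket_condition (n m : ℕ) (hn : 2 ≤ n) (hm : 1 ≤ m) :
    ∀ i j : ℤ, i < 0 → j < 0 → ∀ x ∈ gFilt n m i, ∀ y ∈ gFilt n m j,
      gBracket x y ∈ gFilt n m (min i j - 1) := by
  intro i j hi hj x hx y hy
  apply mem_filt_of_rows n m _ (by omega)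
  intro r b hr
  show (qAct n m x.1 y.2 - qAct n m y.1 x.2) r b = 0
  rw [Matrix.sub_apply,
    qAct_row n m x.1 y.2 (j + n + 1) (filt_rows n m j y hy) r b (by omega),
    qAct_row n m y.1 x.2 (i + n + 1) (filt_rows n m i x hx) r b (by omega),
    sub_zero]
end
end

section
/- The bilinear form ⟨·,·⟩ on g defined by declaring X, H, Y, v^i ⊗ e_b, e^a_b pairwise orthogonal with ⟨X,X⟩ = ⟨Y,Y⟩ = 1, ⟨H,H⟩ = 2, ⟨e^a_b, e^a_b⟩ = 1, ⟨v^i⊗e_b, v^i⊗e_b⟩ = (n−i)!/i! is a positive definite inner product satisfying ⟨A,B⟩ = tr(AᵀB) for A,B in q and ⟨Au, v⟩ = ⟨u, Aᵀv⟩ for all A ∈ q, u,v ∈ a, where Aᵀ is the transpose with respect to the standard matrix realizations. -/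
noncomputable section

open scoped BigOperators

/-- The inner product on `g`: `X, H, Y, v^i ⊗ e_b, e^a_b` are pairwise
orthogonal, `⟨X,X⟩ = ⟨Y,Y⟩ = 1`, `⟨H,H⟩ = 2`, `⟨e^a_b,e^a_b⟩ = 1`,
`⟨v^i⊗e_b, v^i⊗e_b⟩ = (n−i)!/i!`. -/
def innerG {n m : ℕ} (x y : Glie n m) : ℝ :=
  x.1.1.1*y.1.1.1 + 2*x.1.1.2.1*y.1.1.2.1 + x.1.1.2.2*y.1.1.2.2
  + ∑ a : Fin m, ∑ b : Fin m, x.1.2 a b * y.1.2 a b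
  + ∑ i : Fin (n+1), ∑ b : Fin m, (((n - (i:ℕ)).factorial : ℝ) / ((i:ℕ).factorial)) * x.2 i b * y.2 i b

/-- The matrix of `α·X + β·H + γ·Y` in the basis `x, y` of `ℝ²`. -/
def toMat2 (p : Sl2) : Matrix (Fin 2) (Fin 2) ℝ := !![p.2.1, p.1; p.2.2, -p.2.1]

/-- Transpose on `sl₂` (w.r.t. the standard matrix realization): `Xᵀ = Y`,
`Hᵀ = H`, `Yᵀ = X`. -/
def sl2T (p : Sl2) : Sl2 := (p.2.2, p.2.1, p.1)

/-- The weight function `c i = (n-i)!/i!`. -/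
def cfac (n : ℕ) (i : Fin (n+1)) : ℝ := ((n - (i:ℕ)).factorial : ℝ) / ((i:ℕ).factorial)

lemma cfac_pos (n : ℕ) (i : Fin (n+1)) : 0 < cfac n i := by
  unfold cfac
  exact div_pos (by exact_mod_cast Nat.factorial_pos _) (by exact_mod_cast Nat.factorial_pos _)

lemma cfac_step (n : ℕ) (i : ℕ) (h : i + 1 ≤ n) :
    ((n - i).factorial : ℝ) / (i.factorial : ℝ)
      = ((n:ℝ) - ((i+1 : ℕ):ℝ) + 1) * ((i+1 : ℕ):ℝ)
        * (((n - (i+1)).factorial : ℝ) / (((i+1 : ℕ)).factorial : ℝ)) := by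
  have h1 : n - i = (n - (i+1)) + 1 := by omega
  have h2 : ((n:ℝ) - ((i+1:ℕ):ℝ) + 1) = ((n - i : ℕ) : ℝ) := by
    rw [Nat.cast_sub (by omega)]; push_cast; ring
  rw [h1, Nat.factorial_succ, Nat.factorial_succ, h2, h1]
  have f1 : ((i.factorial : ℝ)) ≠ 0 := by exact_mod_cast Nat.factorial_ne_zero i
  have f2 : (((i+1:ℕ) : ℝ)) ≠ 0 := by positivity
  push_cast
  field_simp

/-- The key symmetry: `D · sl2Mat p = (sl2Mat (sl2T p))ᵀ · D` entrywise. -/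
lemma cfac_sl2Mat (n : ℕ) (p : Sl2) (i j : Fin (n+1)) :
    cfac n i * sl2Mat n p i j = sl2Mat n (sl2T p) j i * cfac n j := by
  have hi : (i:ℕ) ≤ n := by omega
  have hj : (j:ℕ) ≤ n := by omega
  unfold sl2Mat sl2T cfac
  simp only [Fin.ext_iff]
  split_ifs with h1 h2 h3 h4 h5 h6 <;> try (exfalso; omega)
  all_goals try ring1
  · have h : (j:ℕ) = (i:ℕ)+1 := by omega
    rw [h, cfac_step n (i:ℕ) (by omega)]
    push_cast
    ring
  · have h : (i:ℕ) = (j:ℕ) := by omega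
    rw [h]; ring
  · have h : (i:ℕ) = (j:ℕ)+1 := by omega
    rw [h, cfac_step n (j:ℕ) (by omega)]
    push_cast
    ring


lemma sum_sl2_adj (n m : ℕ) (p : Sl2) (u v : Avec n m) :
    ∑ i, ∑ b, cfac n i * (sl2Mat n p * u) i b * v i b
      = ∑ i, ∑ b, cfac n i * u i b * (sl2Mat n (sl2T p) * v) i b := by
  simp only [Matrix.mul_apply]
  rw [Finset.sum_comm]
  conv_rhs => rw [Finset.sum_comm]
  refine Finset.sum_congr rfl fun b _ => ?_
  have h1 : ∀ i : Fin (n+1), cfac n i * (∑ j, sl2Mat n p i j * u j b) * v i b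
      = ∑ j, (sl2Mat n (sl2T p) j i * cfac n j) * (u j b * v i b) := by
    intro i
    rw [Finset.mul_sum, Finset.sum_mul]
    refine Finset.sum_congr rfl fun j _ => ?_
    rw [← cfac_sl2Mat]
    ring
  rw [Finset.sum_congr rfl fun i _ => h1 i, Finset.sum_comm]
  refine Finset.sum_congr rfl fun j _ => ?_
  rw [Finset.mul_sum]
  refine Finset.sum_congr rfl fun i _ => ?_
  ring

lemma sum_gl_adj (n m : ℕ) (B : Gl m) (u v : Avec n m) :
    ∑ i, ∑ b, cfac n i * (u * B.transpose) i b * v i b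
      = ∑ i, ∑ b, cfac n i * u i b * (v * B) i b := by
  simp only [Matrix.mul_apply, Matrix.transpose_apply]
  refine Finset.sum_congr rfl fun i _ => ?_
  have h1 : ∀ b : Fin m, cfac n i * (∑ k, u i k * B b k) * v i b
      = ∑ k, cfac n i * u i k * (B b k * v i b) := by
    intro b
    rw [Finset.mul_sum, Finset.sum_mul]
    refine Finset.sum_congr rfl fun k _ => ?_
    ring
  rw [Finset.sum_congr rfl fun b _ => h1 b, Finset.sum_comm]
  refine Finset.sum_congr rfl fun b _ => ?_
  rw [Finset.mul_sum]
  refine Finset.sum_congr rfl fun k _ => ?_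
  ring

/-- the bilinear form `⟨·,·⟩` on `g` is a positive definite inner
product, on `q` it is `⟨A,B⟩ = tr(AᵀB)`, and the action of `q` on `a`
satisfies `⟨Au, v⟩ = ⟨u, Aᵀv⟩`. -/
theorem innerG_properties (n m : ℕ) (hn : 2 ≤ n) (hm : 1 ≤ m) :
    (∀ x y : Glie n m, innerG x y = innerG y x) ∧
    (∀ x y z : Glie n m, innerG (x + y) z = innerG x z + innerG y z) ∧
    (∀ (c : ℝ) (x y : Glie n m), innerG (c • x) y = c * innerG x y) ∧
    (∀ x : Glie n m, x ≠ 0 → 0 < innerG x x) ∧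
    (∀ (p q : Sl2) (B C : Gl m),
        innerG (n := n) ((p, B), 0) ((q, C), 0)
          = ((toMat2 p).transpose * toMat2 q).trace + (B.transpose * C).trace) ∧
    (∀ (p : Sl2) (B : Gl m) (u v : Avec n m),
        innerG ((0 : Qlie m), qAct n m (p, B) u) ((0 : Qlie m), v)
          = innerG ((0 : Qlie m), u) ((0 : Qlie m), qAct n m (sl2T p, B.transpose) v)) := by
  refine ⟨?_, ?_, ?_, ?_, ?_, ?_⟩
  · intro x y
    unfold innerG
    congr 1
    · congr 1
      · ring
      · exact Finset.sum_congr rfl fun a _ => Finset.sum_congr rfl fun b _ => mul_comm _ _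
    · exact Finset.sum_congr rfl fun i _ => Finset.sum_congr rfl fun b _ => by ring
  · intro x y z
    unfold innerG
    simp only [Prod.fst_add, Prod.snd_add, Matrix.add_apply, mul_add, add_mul,
      Finset.sum_add_distrib]
    ring
  · intro c x y
    unfold innerG
    simp only [Prod.smul_fst, Prod.smul_snd, Matrix.smul_apply, smul_eq_mul, mul_add,
      Finset.mul_sum]
    congr 1
    · congr 1
      · ring
      · exact Finset.sum_congr rfl fun a _ => Finset.sum_congr rfl fun b _ => by ring
    · exact Finset.sum_congr rfl fun i _ => Finset.sum_congr rfl fun b _ => by ring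
  · rintro ⟨⟨⟨a, b, c⟩, B⟩, u⟩ hx
    have h4 : 0 ≤ ∑ a' : Fin m, ∑ b' : Fin m, B a' b' * B a' b' :=
      Finset.sum_nonneg fun _ _ => Finset.sum_nonneg fun _ _ => mul_self_nonneg _
    have h5nn : ∀ (i : Fin (n+1)) (b' : Fin m),
        0 ≤ (((n - (i:ℕ)).factorial : ℝ) / ((i:ℕ).factorial)) * u i b' * u i b' := by
      intro i b'
      rw [mul_assoc]
      exact mul_nonneg (cfac_pos n i).le (mul_self_nonneg _)
    have h5 : 0 ≤ ∑ i : Fin (n+1), ∑ b' : Fin m,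
        (((n - (i:ℕ)).factorial : ℝ) / ((i:ℕ).factorial)) * u i b' * u i b' :=
      Finset.sum_nonneg fun i _ => Finset.sum_nonneg fun b' _ => h5nn i b'
    rcases eq_or_lt_of_le (show (0:ℝ) ≤ innerG (((a,b,c),B),u) (((a,b,c),B),u) by
      unfold innerG
      have := mul_self_nonneg a
      have := mul_self_nonneg b
      have := mul_self_nonneg c
      dsimp only
      nlinarith [h4, h5]) with h0 | hlt
    · exfalso
      apply hx
      unfold innerG at h0
      dsimp only at h0
      have ha : a = 0 := by nlinarith [h4, h5, mul_self_nonneg b, mul_self_nonneg c]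
      have hb : b = 0 := by nlinarith [h4, h5, mul_self_nonneg a, mul_self_nonneg c]
      have hc : c = 0 := by nlinarith [h4, h5, mul_self_nonneg a, mul_self_nonneg b]
      have hS4 : (∑ a' : Fin m, ∑ b' : Fin m, B a' b' * B a' b') = 0 := by
        nlinarith [h5, mul_self_nonneg a, mul_self_nonneg b, mul_self_nonneg c]
      have hS5 : (∑ i : Fin (n+1), ∑ b' : Fin m,
          (((n - (i:ℕ)).factorial : ℝ) / ((i:ℕ).factorial)) * u i b' * u i b') = 0 := by
        nlinarith [h4, mul_self_nonneg a, mul_self_nonneg b, mul_self_nonneg c]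
      have hB : B = 0 := by
        ext a' b'
        have := (Finset.sum_eq_zero_iff_of_nonneg
          (fun a' _ => Finset.sum_nonneg fun b' _ => mul_self_nonneg (B a' b'))).mp hS4
            a' (Finset.mem_univ _)
        have := (Finset.sum_eq_zero_iff_of_nonneg
          (fun b' _ => mul_self_nonneg (B a' b'))).mp this b' (Finset.mem_univ _)
        simpa [mul_self_eq_zero] using this
      have hu : u = 0 := by
        ext i b'
        have h1 := (Finset.sum_eq_zero_iff_of_nonneg
          (fun i _ => Finset.sum_nonneg fun b' _ => h5nn i b')).mp hS5 i (Finset.mem_univ _)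
        have h2 := (Finset.sum_eq_zero_iff_of_nonneg
          (fun b' _ => h5nn i b')).mp h1 b' (Finset.mem_univ _)
        have hc' := (cfac_pos n i).ne'
        unfold cfac at hc'
        have : u i b' * u i b' = 0 := by
          rcases mul_eq_zero.mp (by rw [mul_assoc] at h2; exact h2) with h | h
          · exact absurd h hc'
          · exact h
        simpa [mul_self_eq_zero] using this
      simp [ha, hb, hc, hB, hu, Prod.ext_iff]
    · exact hlt
  · intro p q B C
    have h2 : ((toMat2 p).transpose * toMat2 q).trace
        = p.1*q.1 + 2*p.2.1*q.2.1 + p.2.2*q.2.2 := by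
      simp [toMat2, Matrix.trace_fin_two, Matrix.mul_apply, Fin.sum_univ_two,
        Matrix.transpose]
      ring
    have h3 : (B.transpose * C).trace = ∑ a : Fin m, ∑ b : Fin m, B a b * C a b := by
      rw [Matrix.trace]
      simp only [Matrix.diag, Matrix.mul_apply, Matrix.transpose_apply]
      rw [Finset.sum_comm]
    rw [h2, h3]
    simp [innerG]
  · intro p B u v
    calc innerG ((0 : Qlie m), qAct n m (p, B) u) ((0 : Qlie m), v)
        = ∑ i, ∑ b, cfac n i * (qAct n m (p, B) u) i b * v i b := by
          simp [innerG, cfac]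
      _ = ∑ i, ∑ b, (cfac n i * (sl2Mat n p * u) i b * v i b
            + cfac n i * (u * B.transpose) i b * v i b) := by
          refine Finset.sum_congr rfl fun i _ => Finset.sum_congr rfl fun b _ => ?_
          simp only [qAct, Matrix.add_apply]
          ring
      _ = (∑ i, ∑ b, cfac n i * (sl2Mat n p * u) i b * v i b)
            + ∑ i, ∑ b, cfac n i * (u * B.transpose) i b * v i b := by
          simp [Finset.sum_add_distrib]
      _ = (∑ i, ∑ b, cfac n i * u i b * (sl2Mat n (sl2T p) * v) i b)
            + ∑ i, ∑ b, cfac n i * u i b * (v * B) i b := by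
          rw [sum_sl2_adj, sum_gl_adj]
      _ = ∑ i, ∑ b, cfac n i * u i b * (qAct n m (sl2T p, B.transpose) v) i b := by
          rw [← Finset.sum_add_distrib]
          · refine Finset.sum_congr rfl fun i _ => ?_
            rw [← Finset.sum_add_distrib]
            refine Finset.sum_congr rfl fun b _ => ?_
            simp only [qAct, Matrix.add_apply, Matrix.transpose_transpose]
            ring
      _ = innerG ((0 : Qlie m), u) ((0 : Qlie m), qAct n m (sl2T p, B.transpose) v) := by
          simp [innerG, cfac]
end
end

section
/- Let a = V_n ⊗ ℝ^m and q = sl₂ ⊕ gl_m ⊆ gl(a) acting via the tensor product representation (n ≥ 2, m ≥ 1, excluding (n,m) = (2,1)). Then the first prolongation of q is trivial: if φ : a → q is linear and satisfies φ(u)v = φ(v)u for all u,v ∈ a, then φ = 0. -/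
noncomputable section

open scoped BigOperators

/-- Auxiliary: the image under `φ` of the basis vector `v^i ⊗ e_b`. -/
def phiE (n m : ℕ) (φ : Avec n m →ₗ[ℝ] Qlie m) (i : ℕ) (hi : i < n+1) (b : Fin m) : Qlie m :=
  φ (Matrix.single ⟨i, hi⟩ b 1)

/-- Auxiliary: an element of `q` vanishes iff all its components vanish. -/
theorem qlie_eq_zero {m : ℕ} (x : Qlie m) (h1 : x.1.1 = 0) (h2 : x.1.2.1 = 0)
    (h3 : x.1.2.2 = 0) (h4 : ∀ d c, x.2 d c = 0) : x = 0 := by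
  obtain ⟨⟨a, b, c⟩, B⟩ := x
  dsimp at h1 h2 h3 h4
  subst h1; subst h2; subst h3
  refine Prod.ext rfl ?_
  ext d c
  exact h4 d c

/-- the first prolongation of `q = sl₂ ⊕ gl_m ⊆ gl(a)`,
`a = V_n ⊗ ℝ^m`, is trivial (for `n ≥ 2`, `m ≥ 1`, `(n,m) ≠ (2,1)`): any
linear `φ : a → q` with `φ(u)v = φ(v)u` for all `u, v ∈ a` vanishes. -/
theorem first_prolongation_trivial (n m : ℕ) (hn : 2 ≤ n) (hm : 1 ≤ m)
    (hex : ¬(n = 2 ∧ m = 1)) (φ : Avec n m →ₗ[ℝ] Qlie m)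
    (hφ : ∀ u v : Avec n m, qAct n m (φ u) v = qAct n m (φ v) u) :
    φ = 0 := by
  have hL : ∀ (M : Matrix (Fin (n+1)) (Fin (n+1)) ℝ) (j : Fin (n+1)) (c : Fin m)
      (k : Fin (n+1)) (d : Fin m),
      (M * Matrix.single j c (1:ℝ)) k d = if c = d then M k j else 0 := by
    intro M j c k d
    by_cases hcd : c = d <;>
      simp [Matrix.mul_apply, Matrix.single, hcd, ite_and]
  have hR : ∀ (i : Fin (n+1)) (b : Fin m) (B : Gl m) (k : Fin (n+1)) (d : Fin m),
      (Matrix.single i b (1:ℝ) * B.transpose) k d = if i = k then B d b else 0 := by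
    intro i b B k d
    by_cases hik : i = k <;>
      simp [Matrix.mul_apply, Matrix.single, hik, ite_and]
  have key : ∀ (i j k : Fin (n+1)) (b c d : Fin m),
      (if c = d then sl2Mat n (φ (Matrix.single i b 1)).1 k j else 0)
        + (if j = k then (φ (Matrix.single i b 1)).2 d c else 0)
    = (if b = d then sl2Mat n (φ (Matrix.single j c (1:ℝ))).1 k i else 0)
        + (if i = k then (φ (Matrix.single j c (1:ℝ))).2 d b else 0) := by
    intro i j k b c d
    have h := congrFun (congrFun
      (hφ (Matrix.single i b 1) (Matrix.single j c (1:ℝ))) k) d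
    rw [qAct, qAct, Matrix.add_apply, Matrix.add_apply, hL, hL, hR, hR] at h
    exact h
  have key' : ∀ (b c d : Fin m) (i j k : ℕ) (hi : i < n+1) (hj : j < n+1) (hk : k < n+1),
      (if c = d then
          (phiE n m φ i hi b).1.1 * (if j = k+1 then (1:ℝ) else 0)
          + (phiE n m φ i hi b).1.2.1 * (if j = k then (n:ℝ) - 2*(k:ℝ) else 0)
          + (phiE n m φ i hi b).1.2.2 * (if j+1 = k then ((n:ℝ) - (k:ℝ) + 1) * (k:ℝ) else 0)
        else 0)
      + (if j = k then (phiE n m φ i hi b).2 d c else 0)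
      = (if b = d then
          (phiE n m φ j hj c).1.1 * (if i = k+1 then (1:ℝ) else 0)
          + (phiE n m φ j hj c).1.2.1 * (if i = k then (n:ℝ) - 2*(k:ℝ) else 0)
          + (phiE n m φ j hj c).1.2.2 * (if i+1 = k then ((n:ℝ) - (k:ℝ) + 1) * (k:ℝ) else 0)
        else 0)
      + (if i = k then (phiE n m φ j hj c).2 d b else 0) := by
    intro b c d i j k hi hj hk
    have h := key ⟨i, hi⟩ ⟨j, hj⟩ ⟨k, hk⟩ b c d
    simpa only [sl2Mat, Fin.mk.injEq, phiE, Fin.val_mk] using h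
  have main : ∀ (i : ℕ) (hi : i < n+1) (b : Fin m), phiE n m φ i hi b = 0 := by
    rcases Nat.lt_or_ge m 2 with hm2 | hm2
    · -- m = 1
      obtain rfl : m = 1 := by omega
      have hn3 : 3 ≤ n := by
        rcases Nat.lt_or_ge n 3 with h | h
        · exact absurd ⟨by omega, rfl⟩ hex
        · exact h
      have key1 : ∀ (i j k : ℕ) (hi : i < n+1) (hj : j < n+1) (hk : k < n+1),
          (phiE n 1 φ i hi 0).1.1 * (if j = k+1 then (1:ℝ) else 0)
          + (phiE n 1 φ i hi 0).1.2.1 * (if j = k then (n:ℝ) - 2*(k:ℝ) else 0)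
          + (phiE n 1 φ i hi 0).1.2.2 * (if j+1 = k then ((n:ℝ) - (k:ℝ) + 1) * (k:ℝ) else 0)
          + (if j = k then (phiE n 1 φ i hi 0).2 0 0 else 0)
          = (phiE n 1 φ j hj 0).1.1 * (if i = k+1 then (1:ℝ) else 0)
          + (phiE n 1 φ j hj 0).1.2.1 * (if i = k then (n:ℝ) - 2*(k:ℝ) else 0)
          + (phiE n 1 φ j hj 0).1.2.2 * (if i+1 = k then ((n:ℝ) - (k:ℝ) + 1) * (k:ℝ) else 0)
          + (if i = k then (phiE n 1 φ j hj 0).2 0 0 else 0) := by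
        intro i j k hi hj hk
        have h := key' 0 0 0 i j k hi hj hk
        rw [if_pos (show (0 : Fin 1) = 0 from rfl)] at h
        exact h
      rcases Nat.lt_or_ge n 4 with hn4 | hn4
      · -- n = 3 : fully explicit
        obtain rfl : n = 3 := by omega
        have p0 : (0:ℕ) < 3+1 := by omega
        have p1 : (1:ℕ) < 3+1 := by omega
        have p2 : (2:ℕ) < 3+1 := by omega
        have p3 : (3:ℕ) < 3+1 := by omega
        have c0 := key1 0 2 2 p0 p2 p2
        have c1 := key1 0 3 3 p0 p3 p3
        have c2 := key1 3 0 0 p3 p0 p0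
        have c3 := key1 3 1 1 p3 p1 p1
        have c4 := key1 1 3 3 p1 p3 p3
        have c5 := key1 2 0 0 p2 p0 p0
        have c6 := key1 0 3 2 p0 p3 p2
        have c7 := key1 2 1 0 p2 p1 p0
        have c8 := key1 3 1 0 p3 p1 p0
        have c9 := key1 0 1 2 p0 p1 p2
        have c10 := key1 1 2 3 p1 p2 p3
        have c11 := key1 3 0 1 p3 p0 p1
        have c12 := key1 2 0 1 p2 p0 p1
        have c13 := key1 1 3 2 p1 p3 p2
        have c14 := key1 1 2 2 p1 p2 p2
        have c15 := key1 2 1 1 p2 p1 p1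
        norm_num at c0 c1 c2 c3 c4 c5 c6 c7 c8 c9 c10 c11 c12 c13 c14 c15
        intro i hi b
        obtain rfl : b = 0 := Subsingleton.elim b 0
        have hB : ∀ (i : ℕ) (hi : i < 3+1),
            (∀ (d c : Fin 1), (phiE 3 1 φ i hi 0).2 d c = 0) ↔
              (phiE 3 1 φ i hi 0).2 0 0 = 0 := by
          intro i hi
          constructor
          · intro h; exact h 0 0
          · intro h d c
            rw [Subsingleton.elim d 0, Subsingleton.elim c 0]; exact h
        interval_cases i
        · exact qlie_eq_zero _ (by linarith) (by linarith) (by linarith)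
            ((hB 0 hi).mpr (by linarith))
        · exact qlie_eq_zero _ (by linarith) (by linarith) (by linarith)
            ((hB 1 hi).mpr (by linarith))
        · exact qlie_eq_zero _ (by linarith) (by linarith) (by linarith)
            ((hB 2 hi).mpr (by linarith))
        · exact qlie_eq_zero _ (by linarith) (by linarith) (by linarith)
            ((hB 3 hi).mpr (by linarith))
      · -- n ≥ 4
        have hR0 : ∀ (i j : ℕ) (hi : i < n+1) (hj : j < n+1), (i+2 ≤ j ∨ j+2 ≤ i) →
            (phiE n 1 φ i hi 0).1.2.1 * ((n:ℝ) - 2*(j:ℝ))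
              + (phiE n 1 φ i hi 0).2 0 0 = 0 := by
          intro i j hi hj hd
          have h := key1 i j j hi hj hj
          rw [if_neg (show ¬(j = j+1) by omega), if_pos (show j = j from rfl),
              if_pos (show j = j from rfl),
              if_neg (show ¬(j+1 = j) by omega), if_neg (show ¬(i = j+1) by omega),
              if_neg (show ¬(i = j) by omega), if_neg (show ¬(i = j) by omega),
              if_neg (show ¬(i+1 = j) by omega)] at h
          linear_combination h
        have hbe1 : ∀ (i : ℕ) (hi : i < n+1), (phiE n 1 φ i hi 0).1.2.1 = 0 := by
          intro i hi
          obtain ⟨j1, j2, h1, h2, h3, h4, h5⟩ : ∃ j1 j2 : ℕ, j1 < n+1 ∧ j2 < n+1 ∧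
              (i+2 ≤ j1 ∨ j1+2 ≤ i) ∧ (i+2 ≤ j2 ∨ j2+2 ≤ i) ∧ j1 < j2 := by
            rcases Nat.lt_or_ge i 2 with h | h
            · exact ⟨n-1, n, by omega, by omega, by omega, by omega, by omega⟩
            · rcases le_or_gt (i+2) n with h' | h'
              · exact ⟨0, n, by omega, by omega, by omega, by omega, by omega⟩
              · exact ⟨0, 1, by omega, by omega, by omega, by omega, by omega⟩
          have e1 := hR0 i j1 hi h1 h3
          have e2 := hR0 i j2 hi h2 h4
          have hj : (j1:ℝ) < (j2:ℝ) := by exact_mod_cast h5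
          have h6 : (phiE n 1 φ i hi 0).1.2.1 * (2*(j2:ℝ) - 2*(j1:ℝ)) = 0 := by
            linear_combination e1 - e2
          rcases mul_eq_zero.mp h6 with h7 | h7
          · exact h7
          · linarith
        have hB1 : ∀ (i : ℕ) (hi : i < n+1), (phiE n 1 φ i hi 0).2 0 0 = 0 := by
          intro i hi
          obtain ⟨j, h1, h3⟩ : ∃ j : ℕ, j < n+1 ∧ (i+2 ≤ j ∨ j+2 ≤ i) := by
            rcases Nat.lt_or_ge i 2 with h | h
            · exact ⟨n, by omega, by omega⟩
            · exact ⟨0, by omega, by omega⟩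
          have e1 := hR0 i j hi h1 h3
          have hb := hbe1 i hi
          linear_combination e1 - ((n:ℝ) - 2*(j:ℝ)) * hb
        have hal1 : ∀ (i : ℕ) (hi : i < n+1), (phiE n 1 φ i hi 0).1.1 = 0 := by
          intro i hi
          obtain ⟨k, hk, h1, h2⟩ : ∃ k : ℕ, k+1 < n+1 ∧ i ≠ k+1 ∧ i+1 ≠ k := by
            rcases Nat.lt_or_ge i n with h | h
            · exact ⟨i, by omega, by omega, by omega⟩
            · exact ⟨0, by omega, by omega, by omega⟩
          have h := key1 i (k+1) k hi (by omega) (by omega)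
          simp only [hbe1, hB1, zero_mul, mul_zero, add_zero, zero_add, ite_self] at h
          simpa [h1, h2, show ¬(k+1+1 = k) by omega] using h
        have hga1 : ∀ (i : ℕ) (hi : i < n+1), (phiE n 1 φ i hi 0).1.2.2 = 0 := by
          intro i hi
          obtain ⟨j, hj, h1, h2⟩ : ∃ j : ℕ, j+1 < n+1 ∧ i ≠ j+1+1 ∧ i ≠ j := by
            rcases Nat.eq_zero_or_pos i with rfl | h
            · exact ⟨n-1, by omega, by omega, by omega⟩
            · exact ⟨i-1, by omega, by omega, by omega⟩
          have h := key1 i j (j+1) hi (by omega) (by omega)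
          simp only [hbe1, hB1, zero_mul, mul_zero, add_zero, zero_add, ite_self] at h
          simp [h1, h2, show ¬(j = j+1+1) by omega] at h
          have c1 : (j:ℝ) + 1 ≤ (n:ℝ) := by exact_mod_cast (show j+1 ≤ n by omega)
          have c2 : (0:ℝ) ≤ (j:ℝ) := Nat.cast_nonneg j
          rcases h with h7 | h7 | h7
          · exact h7
          · linarith
          · linarith
        intro i hi b
        obtain rfl : b = 0 := Subsingleton.elim b 0
        refine qlie_eq_zero _ (hal1 i hi) (hbe1 i hi) (hga1 i hi) ?_
        intro d c
        rw [Subsingleton.elim d 0, Subsingleton.elim c 0]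
        exact hB1 i hi
    · -- m ≥ 2
      have hcex : ∀ b : Fin m, ∃ c : Fin m, c ≠ b := by
        intro b
        rcases eq_or_ne b ⟨0, by omega⟩ with rfl | hb
        · exact ⟨⟨1, by omega⟩, by simp [Fin.ext_iff]⟩
        · exact ⟨⟨0, by omega⟩, Ne.symm hb⟩
      have hal : ∀ (i : ℕ) (hi : i < n+1) (b : Fin m), (phiE n m φ i hi b).1.1 = 0 := by
        intro i hi b
        obtain ⟨c, hc⟩ := hcex b
        obtain ⟨k, hk, hki⟩ : ∃ k : ℕ, k+1 < n+1 ∧ i ≠ k := by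
          rcases Nat.eq_zero_or_pos i with rfl | h
          · exact ⟨1, by omega, by omega⟩
          · exact ⟨0, by omega, by omega⟩
        have h := key' b c c i (k+1) k hi (by omega) (by omega)
        rw [if_pos (show c = c from rfl), if_neg (Ne.symm hc),
            if_pos (show k+1 = k+1 from rfl), if_neg (show ¬(k+1 = k) by omega),
            if_neg (show ¬(k+1 = k) by omega),
            if_neg (show ¬(k+1+1 = k) by omega), if_neg hki] at h
        simpa using h
      have hga : ∀ (i : ℕ) (hi : i < n+1) (b : Fin m), (phiE n m φ i hi b).1.2.2 = 0 := by
        intro i hi b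
        obtain ⟨c, hc⟩ := hcex b
        obtain ⟨j, hj, hji⟩ : ∃ j : ℕ, j+1 < n+1 ∧ i ≠ j+1 := by
          rcases eq_or_ne i 1 with rfl | h
          · exact ⟨1, by omega, by omega⟩
          · exact ⟨0, by omega, by omega⟩
        have h := key' b c c i j (j+1) hi (by omega) (by omega)
        rw [if_pos (show c = c from rfl), if_neg (Ne.symm hc),
            if_neg (show ¬(j = j+1+1) by omega), if_neg (show ¬(j = j+1) by omega),
            if_neg (show ¬(j = j+1) by omega),
            if_pos (show j+1 = j+1 from rfl), if_neg hji] at h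
        have h' : (phiE n m φ i hi b).1.2.2
            * (((n:ℝ) - ((j+1:ℕ):ℝ) + 1) * ((j+1:ℕ):ℝ)) = 0 := by linear_combination h
        have hpos : (0:ℝ) < ((n:ℝ) - ((j+1:ℕ):ℝ) + 1) * ((j+1:ℕ):ℝ) := by
          have c1 : ((j+1:ℕ):ℝ) ≤ (n:ℝ) := by exact_mod_cast (show j+1 ≤ n by omega)
          have c2 : (0:ℝ) < ((j+1:ℕ):ℝ) := by exact_mod_cast Nat.succ_pos j
          nlinarith
        rcases mul_eq_zero.mp h' with h7 | h7
        · exact h7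
        · linarith
      have hRm : ∀ (i j : ℕ) (hi : i < n+1) (hj : j < n+1) (b c : Fin m), c ≠ b → i ≠ j →
          (phiE n m φ i hi b).1.2.1 * ((n:ℝ) - 2*(j:ℝ))
            + (phiE n m φ i hi b).2 c c = 0 := by
        intro i j hi hj b c hc hij
        have h := key' b c c i j j hi hj hj
        rw [if_pos (show c = c from rfl), if_neg (Ne.symm hc),
            if_neg (show ¬(j = j+1) by omega), if_pos (show j = j from rfl),
            if_pos (show j = j from rfl),
            if_neg (show ¬(j+1 = j) by omega), if_neg hij] at h
        linear_combination h
      have hbe : ∀ (i : ℕ) (hi : i < n+1) (b : Fin m), (phiE n m φ i hi b).1.2.1 = 0 := by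
        intro i hi b
        obtain ⟨c, hc⟩ := hcex b
        obtain ⟨j1, j2, h1, h2, h3, h4, h5⟩ : ∃ j1 j2 : ℕ, j1 < n+1 ∧ j2 < n+1 ∧
            i ≠ j1 ∧ i ≠ j2 ∧ j1 < j2 := by
          rcases Nat.eq_zero_or_pos i with rfl | h
          · exact ⟨1, 2, by omega, by omega, by omega, by omega, by omega⟩
          · rcases eq_or_ne i 1 with rfl | h'
            · exact ⟨0, 2, by omega, by omega, by omega, by omega, by omega⟩
            · exact ⟨0, 1, by omega, by omega, by omega, by omega, by omega⟩
        have e1 := hRm i j1 hi h1 b c hc h3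
        have e2 := hRm i j2 hi h2 b c hc h4
        have hj : (j1:ℝ) < (j2:ℝ) := by exact_mod_cast h5
        have h6 : (phiE n m φ i hi b).1.2.1 * (2*(j2:ℝ) - 2*(j1:ℝ)) = 0 := by
          linear_combination e1 - e2
        rcases mul_eq_zero.mp h6 with h7 | h7
        · exact h7
        · linarith
      have hB : ∀ (i : ℕ) (hi : i < n+1) (b d c : Fin m), (phiE n m φ i hi b).2 d c = 0 := by
        intro i hi b d c
        obtain ⟨j, hj, hij⟩ : ∃ j : ℕ, j < n+1 ∧ i ≠ j := by
          rcases Nat.eq_zero_or_pos i with rfl | h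
          · exact ⟨1, by omega, by omega⟩
          · exact ⟨0, by omega, by omega⟩
        have h := key' b c d i j j hi hj hj
        simp only [hal, hbe, hga, zero_mul, mul_zero, add_zero, zero_add, ite_self] at h
        simpa [hij] using h
      intro i hi b
      exact qlie_eq_zero _ (hal i hi b) (hbe i hi b) (hga i hi b) (fun d c => hB i hi b d c)
  -- conclude
  refine LinearMap.ext fun u => ?_
  have hu := Matrix.matrix_eq_sum_single u
  have hz : ∀ (i : Fin (n+1)) (b : Fin m), φ (Matrix.single i b (1:ℝ)) = 0 := by
    intro i b
    have h := main i.val i.isLt b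
    rw [phiE] at h
    simpa using h
  calc φ u = φ (∑ i, ∑ j, Matrix.single i j (u i j)) := by rw [← hu]
  _ = 0 := by
    rw [map_sum]
    apply Finset.sum_eq_zero
    intro i _
    rw [map_sum]
    apply Finset.sum_eq_zero
    intro j _
    rw [show Matrix.single i j (u i j) = u i j • Matrix.single i j (1:ℝ) from
        by rw [Matrix.smul_single, smul_eq_mul, mul_one],
      map_smul, hz i j, smul_zero]
end
end

section
/- Let a = V_n ⊗ ℝ^m with q = sl₂ ⊕ gl_m ⊆ gl(a) as above. Then the Spencer differential ∂_a : a* ⊗ q → Λ²a* ⊗ a, given by (∂_a φ)(u,v) = φ(u)·v − φ(v)·u, is injective on C¹(a,q) = a* ⊗ q when (n,m) ≠ (2,1) and n ≥ 2, m ≥ 1. -/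
noncomputable section

open scoped BigOperators

namespace Sp
variable {n m : ℕ}

lemma cancel {x t : ℝ} (h : x * t = 0) (ht : t ≠ 0) : x = 0 :=
  (mul_eq_zero.mp h).resolve_right ht

lemma mul_std (A : Matrix (Fin (n+1)) (Fin (n+1)) ℝ) (k : Fin (n+1)) (c : Fin m) (j : Fin (n+1)) (c' : Fin m) :
    (A * Matrix.single k c (1:ℝ)) j c' = A j k * (if c' = c then 1 else 0) := by
  simp [Matrix.mul_apply, Matrix.single, ite_and, mul_ite, eq_comm]

lemma std_mulT (M : Matrix (Fin m) (Fin m) ℝ) (k : Fin (n+1)) (c : Fin m) (j : Fin (n+1)) (c' : Fin m) :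
    (Matrix.single k c (1:ℝ) * M.transpose) j c' = (if j = k then 1 else 0) * M c' c := by
  simp [Matrix.mul_apply, Matrix.single, ite_and, eq_comm]

variable (ψ : Avec n m →ₗ[ℝ] Qlie m)

def Ee (i : Fin (n+1)) (b : Fin m) : Avec n m := Matrix.single i b 1
def Av (i : Fin (n+1)) (b : Fin m) : ℝ := (ψ (Ee i b)).1.1
def Bv (i : Fin (n+1)) (b : Fin m) : ℝ := (ψ (Ee i b)).1.2.1
def Cv (i : Fin (n+1)) (b : Fin m) : ℝ := (ψ (Ee i b)).1.2.2
def Mv (i : Fin (n+1)) (b : Fin m) : Gl m := (ψ (Ee i b)).2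

lemma key (H : ∀ u v, qAct n m (ψ u) v = qAct n m (ψ v) u)
    (i k j : Fin (n+1)) (b c c' : Fin m) :
    (Av ψ i b * (if (k:ℕ) = (j:ℕ)+1 then 1 else 0)
      + Bv ψ i b * (if k = j then (n:ℝ) - 2*(j:ℕ) else 0)
      + Cv ψ i b * (if (k:ℕ)+1 = (j:ℕ) then ((n:ℝ) - (j:ℕ) + 1) * (j:ℕ) else 0)) * (if c' = c then 1 else 0)
    + (if j = k then 1 else 0) * Mv ψ i b c' c
    = (Av ψ k c * (if (i:ℕ) = (j:ℕ)+1 then 1 else 0)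
      + Bv ψ k c * (if i = j then (n:ℝ) - 2*(j:ℕ) else 0)
      + Cv ψ k c * (if (i:ℕ)+1 = (j:ℕ) then ((n:ℝ) - (j:ℕ) + 1) * (j:ℕ) else 0)) * (if c' = b then 1 else 0)
    + (if j = i then 1 else 0) * Mv ψ k c c' b := by
  have h := congrFun (congrFun (H (Ee i b) (Ee k c)) j) c'
  simp only [qAct, Matrix.add_apply, Ee, mul_std, std_mulT] at h
  simpa only [sl2Mat, Av, Bv, Cv, Mv, Ee] using h

variable (H : ∀ u v, qAct n m (ψ u) v = qAct n m (ψ v) u)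
include H

lemma rel1 (i j : ℕ) (hi : i ≤ n) (hj : j ≤ n) (hfar : i + 2 ≤ j ∨ j + 2 ≤ i) (b c c' : Fin m) :
    Bv ψ ⟨i, by omega⟩ b * ((n:ℝ) - 2*j) * (if c' = c then 1 else 0)
      + Mv ψ ⟨i, by omega⟩ b c' c = 0 := by
  have h := key ψ H ⟨i, by omega⟩ ⟨j, by omega⟩ ⟨j, by omega⟩ b c c'
  simp only [Fin.mk.injEq, eq_self_iff_true, if_true] at h
  split_ifs at h ⊢ <;> push_cast at h ⊢ <;> first | omega | linarith

lemma rel2 (i : ℕ) (hi : i ≤ n) (b c c' : Fin m) :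
    Bv ψ ⟨i, by omega⟩ b * ((n:ℝ) - 2*i) * (if c' = c then 1 else 0) + Mv ψ ⟨i, by omega⟩ b c' c
    = Bv ψ ⟨i, by omega⟩ c * ((n:ℝ) - 2*i) * (if c' = b then 1 else 0) + Mv ψ ⟨i, by omega⟩ c c' b := by
  have h := key ψ H ⟨i, by omega⟩ ⟨i, by omega⟩ ⟨i, by omega⟩ b c c'
  simp only [Fin.mk.injEq, eq_self_iff_true, if_true] at h
  split_ifs at h ⊢ <;> push_cast at h ⊢ <;> first | omega | linarith

lemma rel3 (i : ℕ) (hi : i + 1 ≤ n) (b c c' : Fin m) :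
    Bv ψ ⟨i+1, by omega⟩ b * ((n:ℝ) - 2*i) * (if c' = c then 1 else 0) + Mv ψ ⟨i+1, by omega⟩ b c' c
    = Av ψ ⟨i, by omega⟩ c * (if c' = b then 1 else 0) := by
  have h := key ψ H ⟨i+1, by omega⟩ ⟨i, by omega⟩ ⟨i, by omega⟩ b c c'
  simp only [Fin.mk.injEq, eq_self_iff_true, if_true] at h
  split_ifs at h ⊢ <;> push_cast at h ⊢ <;> first | omega | linarith

lemma rel4 (i : ℕ) (hi : i + 1 ≤ n) (b c c' : Fin m) :
    Bv ψ ⟨i, by omega⟩ b * ((n:ℝ) - 2*i - 2) * (if c' = c then 1 else 0) + Mv ψ ⟨i, by omega⟩ b c' c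
    = Cv ψ ⟨i+1, by omega⟩ c * (((n:ℝ) - i) * ((i:ℝ)+1)) * (if c' = b then 1 else 0) := by
  have h := key ψ H ⟨i, by omega⟩ ⟨i+1, by omega⟩ ⟨i+1, by omega⟩ b c c'
  simp only [Fin.mk.injEq, eq_self_iff_true, if_true] at h
  split_ifs at h ⊢ <;> push_cast at h ⊢ <;> first | omega | linarith

lemma rel5 (i : ℕ) (hi : i + 1 ≤ n) (b c c' : Fin m) :
    Av ψ ⟨i, by omega⟩ b * (if c' = c then 1 else 0)
    = Bv ψ ⟨i+1, by omega⟩ c * ((n:ℝ) - 2*i) * (if c' = b then 1 else 0)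
      + Mv ψ ⟨i+1, by omega⟩ c c' b := by
  have h := key ψ H ⟨i, by omega⟩ ⟨i+1, by omega⟩ ⟨i, by omega⟩ b c c'
  simp only [Fin.mk.injEq, eq_self_iff_true, if_true] at h
  split_ifs at h ⊢ <;> push_cast at h ⊢ <;> first | omega | linarith

lemma rel11 (i : ℕ) (hi : i + 1 ≤ n) (b c c' : Fin m) :
    Cv ψ ⟨i+1, by omega⟩ b * (((n:ℝ) - i) * ((i:ℝ)+1)) * (if c' = c then 1 else 0)
    = Bv ψ ⟨i, by omega⟩ c * ((n:ℝ) - 2*i - 2) * (if c' = b then 1 else 0)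
      + Mv ψ ⟨i, by omega⟩ c c' b := by
  have h := key ψ H ⟨i+1, by omega⟩ ⟨i, by omega⟩ ⟨i+1, by omega⟩ b c c'
  simp only [Fin.mk.injEq, eq_self_iff_true, if_true] at h
  split_ifs at h ⊢ <;> push_cast at h ⊢ <;> first | omega | linarith

lemma rel7 (i j : ℕ) (hi : i ≤ n) (hj : j + 1 ≤ n) (h1 : i ≠ j) (h2 : i ≠ j+1) (h3 : j ≠ i+1)
    (b : Fin m) : Av ψ ⟨i, by omega⟩ b = 0 := by
  have h := key ψ H ⟨i, by omega⟩ ⟨j+1, by omega⟩ ⟨j, by omega⟩ b b b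
  simp only [Fin.mk.injEq, eq_self_iff_true, if_true] at h
  split_ifs at h <;> first | omega | linarith

lemma rel9 (i k : ℕ) (hi : i ≤ n) (hk : k + 1 ≤ n) (h1 : i ≠ k) (h2 : i ≠ k+1) (h3 : i ≠ k+2)
    (b : Fin m) : Cv ψ ⟨i, by omega⟩ b = 0 := by
  have h := key ψ H ⟨i, by omega⟩ ⟨k, by omega⟩ ⟨k+1, by omega⟩ b b b
  simp only [Fin.mk.injEq, eq_self_iff_true, if_true] at h
  have hk' : ((k:ℝ)+1) ≤ (n:ℝ) := by exact_mod_cast hk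
  have ht : ((n:ℝ) - (k+1) + 1) * ((k:ℝ)+1) ≠ 0 := by
    have h0 : (0:ℝ) ≤ (k:ℝ) := Nat.cast_nonneg k
    exact ne_of_gt (mul_pos (by linarith) (by linarith))
  apply cancel (t := ((n:ℝ) - (k+1) + 1) * ((k:ℝ)+1)) _ ht
  split_ifs at h <;> push_cast at h <;> first | omega | linarith

lemma chainA (hn : 2 ≤ n) (hm2 : 2 ≤ m) : ∀ (i : Fin (n+1)) (b : Fin m), ψ (Ee i b) = 0 := by
  obtain ⟨n', rfl⟩ : ∃ n', n = n'+2 := ⟨n-2, by omega⟩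
  have hne : ∀ b : Fin m, ∃ c : Fin m, c ≠ b := by
    intro b
    refine ⟨if b = ⟨0, by omega⟩ then ⟨1, by omega⟩ else ⟨0, by omega⟩, ?_⟩
    split_ifs with hb
    · simp [hb, Fin.ext_iff]
    · exact fun hc => hb hc.symm
  -- interior B = 0
  have hBint : ∀ (i : ℕ) (hi : i + 2 ≤ n'+2) (b : Fin m), Bv ψ ⟨i+1, by omega⟩ b = 0 := by
    intro i hi b
    obtain ⟨c, hc⟩ := hne b
    have e1 := rel3 ψ H i (by omega) b c c
    have e2 := rel4 ψ H (i+1) (by omega) b c c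
    simp only [eq_self_iff_true, if_true, if_neg hc] at e1 e2
    push_cast at e1 e2
    linarith
  -- interior M formula
  have hMint : ∀ (i : ℕ) (hi : i + 2 ≤ n'+2) (b c' c : Fin m),
      Mv ψ ⟨i+1, by omega⟩ b c' c = Av ψ ⟨i, by omega⟩ c * (if c' = b then 1 else 0) := by
    intro i hi b c' c
    have e1 := rel3 ψ H i (by omega) b c c'
    have hb := hBint i hi b
    rw [hb] at e1
    linarith [e1]
  -- interior A = 0
  have hAint : ∀ (i : ℕ) (hi : i + 2 ≤ n'+2) (c : Fin m), Av ψ ⟨i, by omega⟩ c = 0 := by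
    intro i hi c
    obtain ⟨b, hb⟩ := hne c
    have e := rel2 ψ H (i+1) (by omega) b c b
    have m1 := hMint i hi b b c
    have m2 := hMint i hi c b b
    have b1 := hBint i hi b
    have b2 := hBint i hi c
    simp only [eq_self_iff_true, if_true, if_neg hb] at e m1 m2
    rw [b1, b2, m1, m2] at e
    linarith [e]
  have hMint0 : ∀ (i : ℕ) (hi : i + 2 ≤ n'+2) (b c' c : Fin m),
      Mv ψ ⟨i+1, by omega⟩ b c' c = 0 := by
    intro i hi b c' c
    rw [hMint i hi b c' c, hAint i hi c]
    ring
  -- interior C = 0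
  have hCint : ∀ (i : ℕ) (hi : i + 2 ≤ n'+2) (c : Fin m), Cv ψ ⟨i+2, by omega⟩ c = 0 := by
    intro i hi c
    have e := rel4 ψ H (i+1) (by omega) c c c
    have b1 := hBint i hi c
    have m1 := hMint0 i hi c c c
    simp only [eq_self_iff_true, if_true] at e
    rw [b1, m1] at e
    have hi' : (i:ℝ) ≤ (n':ℝ) := by exact_mod_cast (by omega : i ≤ n')
    have h' : Cv ψ ⟨i+2, by omega⟩ c * ((((n'+2:ℕ):ℝ) - (i+1)) * ((i:ℝ)+2)) = 0 := by
      push_cast at e ⊢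
      linarith [e]
    refine cancel h' (ne_of_gt (mul_pos ?_ (by positivity)))
    push_cast
    linarith
  -- endpoints
  have hAn : ∀ b, Av ψ ⟨n'+2, by omega⟩ b = 0 := fun b =>
    rel7 ψ H (n'+2) 0 (by omega) (by omega) (by omega) (by omega) (by omega) b
  have hC0 : ∀ b, Cv ψ ⟨0, by omega⟩ b = 0 := fun b =>
    rel9 ψ H 0 1 (by omega) (by omega) (by omega) (by omega) (by omega) b
  have hC1 : ∀ c, Cv ψ ⟨1, by omega⟩ c = 0 := by
    intro c
    obtain ⟨b, hb⟩ := hne c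
    have e4 := rel4 ψ H 0 (by omega) b c b
    have e1 := rel1 ψ H 0 2 (by omega) (by omega) (by omega) b c b
    simp only [eq_self_iff_true, if_true, if_neg hb] at e4 e1
    have h' : Cv ψ ⟨1, by omega⟩ c * ((n'+2:ℕ):ℝ) = 0 := by
      push_cast at e4 e1 ⊢
      linarith [e1, e4]
    refine cancel h' (ne_of_gt ?_)
    push_cast
    positivity
  have hB0 : ∀ b, Bv ψ ⟨0, by omega⟩ b = 0 := by
    intro b
    have e4 := rel4 ψ H 0 (by omega) b b b
    have e1 := rel1 ψ H 0 2 (by omega) (by omega) (by omega) b b b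
    simp only [eq_self_iff_true, if_true] at e4 e1
    have hc := hC1 b
    rw [hc] at e4
    push_cast at e4 e1
    linarith
  have hM0 : ∀ (b c' c : Fin m), Mv ψ ⟨0, by omega⟩ b c' c = 0 := by
    intro b c' c
    have e1 := rel1 ψ H 0 2 (by omega) (by omega) (by omega) b c c'
    have hb := hB0 b
    rw [hb] at e1
    linarith [e1]
  have hAn1 : ∀ c, Av ψ ⟨n'+1, by omega⟩ c = 0 := by
    intro c
    obtain ⟨b, hb⟩ := hne c
    have e3 := rel3 ψ H (n'+1) (by omega) b c b
    have e1 := rel1 ψ H (n'+2) n' (by omega) (by omega) (by omega) b c b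
    simp only [eq_self_iff_true, if_true, if_neg hb] at e3 e1
    push_cast at e3 e1
    linarith
  have hBn : ∀ b, Bv ψ ⟨n'+2, by omega⟩ b = 0 := by
    intro b
    have e3 := rel3 ψ H (n'+1) (by omega) b b b
    have e1 := rel1 ψ H (n'+2) n' (by omega) (by omega) (by omega) b b b
    simp only [eq_self_iff_true, if_true] at e3 e1
    have ha := hAn1 b
    rw [ha] at e3
    push_cast at e3 e1
    linarith
  have hMn : ∀ (b c' c : Fin m), Mv ψ ⟨n'+2, by omega⟩ b c' c = 0 := by
    intro b c' c
    have e1 := rel1 ψ H (n'+2) n' (by omega) (by omega) (by omega) b c c'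
    have hb := hBn b
    rw [hb] at e1
    linarith [e1]
  -- assemble
  rintro ⟨i, hilt⟩ b
  have hi : i ≤ n'+2 := by omega
  have hA : Av ψ ⟨i, by omega⟩ b = 0 := by
    rcases (by omega : i + 2 ≤ n'+2 ∨ i = n'+1 ∨ i = n'+2) with h|h|h
    · exact hAint i h b
    · subst h; exact hAn1 b
    · subst h; exact hAn b
  have hB : Bv ψ ⟨i, by omega⟩ b = 0 := by
    rcases (by omega : i = 0 ∨ (1 ≤ i ∧ i ≤ n'+1) ∨ i = n'+2) with h|h|h
    · subst h; exact hB0 b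
    · obtain ⟨t, rfl⟩ : ∃ t, i = t+1 := ⟨i-1, by omega⟩
      exact hBint t (by omega) b
    · subst h; exact hBn b
  have hC : Cv ψ ⟨i, by omega⟩ b = 0 := by
    rcases (by omega : i = 0 ∨ i = 1 ∨ 2 ≤ i) with h|h|h
    · subst h; exact hC0 b
    · subst h; exact hC1 b
    · obtain ⟨t, rfl⟩ : ∃ t, i = t+2 := ⟨i-2, by omega⟩
      exact hCint t (by omega) b
  have hM : Mv ψ ⟨i, by omega⟩ b = 0 := by
    ext c' c
    show Mv ψ ⟨i, by omega⟩ b c' c = 0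
    rcases (by omega : i = 0 ∨ (1 ≤ i ∧ i ≤ n'+1) ∨ i = n'+2) with h|h|h
    · subst h; exact hM0 b c' c
    · obtain ⟨t, rfl⟩ : ∃ t, i = t+1 := ⟨i-1, by omega⟩
      exact hMint0 t (by omega) b c' c
    · subst h; exact hMn b c' c
  have hrep : ψ (Ee ⟨i, hilt⟩ b)
      = ((Av ψ ⟨i, by omega⟩ b, Bv ψ ⟨i, by omega⟩ b, Cv ψ ⟨i, by omega⟩ b), Mv ψ ⟨i, by omega⟩ b) := rfl
  rw [hrep, hA, hB, hC, hM]
  rfl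

lemma chainB (hn : 3 ≤ n) (hm1 : m = 1) : ∀ (i : Fin (n+1)) (b : Fin m), ψ (Ee i b) = 0 := by
  obtain ⟨q, rfl⟩ : ∃ q, n = q+3 := ⟨n-3, by omega⟩
  subst hm1
  have hA2 : ∀ (i : ℕ) (h2 : 2 ≤ i) (hi : i ≤ q+3) (b : Fin 1), Av ψ ⟨i, by omega⟩ b = 0 :=
    fun i h2 hi b => rel7 ψ H i 0 (by omega) (by omega) (by omega) (by omega) (by omega) b
  have hA0 : ∀ b, Av ψ ⟨0, by omega⟩ b = 0 := fun b =>
    rel7 ψ H 0 2 (by omega) (by omega) (by omega) (by omega) (by omega) b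
  have hClow : ∀ (i : ℕ) (hi : i ≤ q+1) (b : Fin 1), Cv ψ ⟨i, by omega⟩ b = 0 :=
    fun i hi b => rel9 ψ H i (q+2) (by omega) (by omega) (by omega) (by omega) (by omega) b
  have hCn : ∀ b, Cv ψ ⟨q+3, by omega⟩ b = 0 := fun b =>
    rel9 ψ H (q+3) q (by omega) (by omega) (by omega) (by omega) (by omega) b
  have hnpos : (0:ℝ) < ((q+3:ℕ):ℝ) := by positivity
  -- B and M at each index
  have hBM0 : ∀ b : Fin 1, Bv ψ ⟨0, by omega⟩ b = 0 ∧ Mv ψ ⟨0, by omega⟩ b b b = 0 := by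
    intro b
    have e1 := rel1 ψ H 0 2 (by omega) (by omega) (by omega) b b b
    have e2 := rel1 ψ H 0 3 (by omega) (by omega) (by omega) b b b
    simp only [eq_self_iff_true, if_true] at e1 e2
    push_cast at e1 e2
    have hB : Bv ψ ⟨0, by omega⟩ b = 0 := by linarith
    exact ⟨hB, by rw [hB] at e1; linarith⟩
  have hBM1 : ∀ b : Fin 1, Bv ψ ⟨1, by omega⟩ b = 0 ∧ Mv ψ ⟨1, by omega⟩ b b b = 0 := by
    intro b
    have e1 := rel3 ψ H 0 (by omega) b b b
    have e2 := rel1 ψ H 1 (q+3) (by omega) (by omega) (by omega) b b b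
    simp only [eq_self_iff_true, if_true] at e1 e2
    rw [hA0 b] at e1
    push_cast at e1 e2
    have hB : Bv ψ ⟨1, by omega⟩ b = 0 := by
      refine cancel (t := 2*((q+3:ℕ):ℝ)) ?_ (by positivity)
      push_cast
      linarith
    exact ⟨hB, by rw [hB] at e1; linarith⟩
  have hBMmid : ∀ (i : ℕ) (h2 : 2 ≤ i) (hi : i ≤ q+1) (b : Fin 1),
      Bv ψ ⟨i, by omega⟩ b = 0 ∧ Mv ψ ⟨i, by omega⟩ b b b = 0 := by
    intro i h2 hi b
    have e1 := rel1 ψ H i 0 (by omega) (by omega) (by omega) b b b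
    have e2 := rel1 ψ H i (q+3) (by omega) (by omega) (by omega) b b b
    simp only [eq_self_iff_true, if_true] at e1 e2
    push_cast at e1 e2
    have hB : Bv ψ ⟨i, by omega⟩ b = 0 := by
      refine cancel (t := 2*((q+3:ℕ):ℝ)) ?_ (by positivity)
      push_cast
      linarith
    exact ⟨hB, by rw [hB] at e1; linarith⟩
  have hBMq2 : ∀ b : Fin 1, Bv ψ ⟨q+2, by omega⟩ b = 0 ∧ Mv ψ ⟨q+2, by omega⟩ b b b = 0 := by
    intro b
    have e1 := rel1 ψ H (q+2) 0 (by omega) (by omega) (by omega) b b b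
    have e2 := rel4 ψ H (q+2) (by omega) b b b
    simp only [eq_self_iff_true, if_true] at e1 e2
    rw [hCn b] at e2
    push_cast at e1 e2
    have hB : Bv ψ ⟨q+2, by omega⟩ b = 0 := by
      refine cancel (t := 2*((q+3:ℕ):ℝ)) ?_ (by positivity)
      push_cast
      linarith
    exact ⟨hB, by rw [hB] at e1; linarith⟩
  have hBMn : ∀ b : Fin 1, Bv ψ ⟨q+3, by omega⟩ b = 0 ∧ Mv ψ ⟨q+3, by omega⟩ b b b = 0 := by
    intro b
    have e1 := rel1 ψ H (q+3) (q+1) (by omega) (by omega) (by omega) b b b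
    have e2 := rel1 ψ H (q+3) q (by omega) (by omega) (by omega) b b b
    simp only [eq_self_iff_true, if_true] at e1 e2
    push_cast at e1 e2
    have hB : Bv ψ ⟨q+3, by omega⟩ b = 0 := by linarith
    exact ⟨hB, by rw [hB] at e1; linarith⟩
  have hBM : ∀ (i : ℕ) (hi : i ≤ q+3) (b : Fin 1),
      Bv ψ ⟨i, by omega⟩ b = 0 ∧ Mv ψ ⟨i, by omega⟩ b b b = 0 := by
    intro i hi b
    rcases (by omega : i = 0 ∨ i = 1 ∨ (2 ≤ i ∧ i ≤ q+1) ∨ i = q+2 ∨ i = q+3) with h|h|h|h|h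
    · subst h; exact hBM0 b
    · subst h; exact hBM1 b
    · exact hBMmid i h.1 h.2 b
    · subst h; exact hBMq2 b
    · subst h; exact hBMn b
  have hA1 : ∀ b : Fin 1, Av ψ ⟨1, by omega⟩ b = 0 := by
    intro b
    have e := rel5 ψ H 1 (by omega) b b b
    simp only [eq_self_iff_true, if_true] at e
    obtain ⟨hB2, hM2⟩ := hBM 2 (by omega) b
    rw [hB2, hM2] at e
    linarith
  have hCq2 : ∀ b : Fin 1, Cv ψ ⟨q+2, by omega⟩ b = 0 := by
    intro b
    have e := rel11 ψ H (q+1) (by omega) b b b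
    simp only [eq_self_iff_true, if_true] at e
    obtain ⟨hB1, hM1⟩ := hBM (q+1) (by omega) b
    rw [hB1, hM1] at e
    have hq : (0:ℝ) ≤ (q:ℝ) := Nat.cast_nonneg q
    refine cancel (t := (((q+3:ℕ):ℝ) - q) * ((q:ℝ)+2)) ?_ (ne_of_gt (mul_pos (by push_cast; linarith) (by linarith)))
    push_cast at e ⊢
    linarith
  -- assemble
  rintro ⟨i, hilt⟩ b
  have hi : i ≤ q+3 := by omega
  have hA : Av ψ ⟨i, by omega⟩ b = 0 := by
    rcases (by omega : i = 0 ∨ i = 1 ∨ 2 ≤ i) with h|h|h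
    · subst h; exact hA0 b
    · subst h; exact hA1 b
    · exact hA2 i h hi b
  have hC : Cv ψ ⟨i, by omega⟩ b = 0 := by
    rcases (by omega : i ≤ q+1 ∨ i = q+2 ∨ i = q+3) with h|h|h
    · exact hClow i h b
    · subst h; exact hCq2 b
    · subst h; exact hCn b
  obtain ⟨hB, hMs⟩ := hBM i hi b
  have hM : Mv ψ ⟨i, by omega⟩ b = 0 := by
    ext c' c
    have hc' : c' = b := by omega
    have hc : c = b := by omega
    subst hc'; subst hc
    exact hMs
  have hrep : ψ (Ee ⟨i, hilt⟩ b)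
      = ((Av ψ ⟨i, by omega⟩ b, Bv ψ ⟨i, by omega⟩ b, Cv ψ ⟨i, by omega⟩ b), Mv ψ ⟨i, by omega⟩ b) := rfl
  rw [hrep, hA, hB, hC, hM]
  rfl

omit H in
lemma qAct_sub (q1 q2 : Qlie m) (u : Avec n m) :
    qAct n m (q1 - q2) u = qAct n m q1 u - qAct n m q2 u := by
  have hs : sl2Mat n (q1 - q2).1 = sl2Mat n q1.1 - sl2Mat n q2.1 := by
    ext i j
    simp only [sl2Mat, Matrix.sub_apply, Prod.fst_sub, Prod.snd_sub]
    ring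
  have h2 : (q1 - q2).2 = q1.2 - q2.2 := rfl
  unfold qAct
  rw [hs, h2, Matrix.transpose_sub, Matrix.sub_mul, Matrix.mul_sub]
  abel

end Sp

/-- the Spencer differential
`∂_a : a* ⊗ q → Λ²a* ⊗ a`, `(∂_a φ)(u,v) = φ(u)·v − φ(v)·u`, is injective on
`C¹(a,q) = a* ⊗ q` for `n ≥ 2`, `m ≥ 1`, `(n,m) ≠ (2,1)`. -/
theorem spencer_differential_injective (n m : ℕ) (hn : 2 ≤ n) (hm : 1 ≤ m)
    (hex : ¬(n = 2 ∧ m = 1)) :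
    Function.Injective (fun φ : Avec n m →ₗ[ℝ] Qlie m =>
      (fun u v : Avec n m => qAct n m (φ u) v - qAct n m (φ v) u)) := by
  intro φ₁ φ₂ h
  have H : ∀ u v, qAct n m ((φ₁ - φ₂) u) v = qAct n m ((φ₁ - φ₂) v) u := by
    intro u v
    have h1 : qAct n m (φ₁ u) v - qAct n m (φ₁ v) u
        = qAct n m (φ₂ u) v - qAct n m (φ₂ v) u := congrFun (congrFun h u) v
    simp only [LinearMap.sub_apply, Sp.qAct_sub]
    exact sub_eq_sub_iff_sub_eq_sub.mp h1
  have hz : ∀ (i : Fin (n+1)) (b : Fin m), (φ₁ - φ₂) (Sp.Ee i b) = 0 := by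
    rcases (by omega : 2 ≤ m ∨ m = 1) with hm2 | hm1
    · exact Sp.chainA (φ₁ - φ₂) H hn hm2
    · exact Sp.chainB (φ₁ - φ₂) H (by omega) hm1
  have hsub : φ₁ - φ₂ = 0 := by
    apply Module.Basis.ext (Matrix.stdBasis ℝ (Fin (n+1)) (Fin m))
    rintro ⟨i, b⟩
    rw [Matrix.stdBasis_eq_single]
    simpa [Sp.Ee] using hz i b
  exact sub_eq_zero.mp hsub
end
end
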